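/- arXiv:1402.0996 — 5 statements merged into one kernel-verified Lean document; each statement's English description precedes it below -/
import Mathlib

section
/- Let X be a real Banach space and let Y be a nonzero closed subspace of X which is an almost isometric ideal (ai-ideal) in X. Then T(X) ≤ T(Y) and t(Y) ≤ t(X). -/
/-- The thinness index `t(X)` of a normed space. -/
noncomputable def thinness (X : Type*) [NormedAddCommGroup X] : ℝ :=
  sInf {r : ℝ | 0 < r ∧ ∀ (n : ℕ) (x : Fin n → X), (∀ i, ‖x i‖ = 1) →
    ∀ ε : ℝ, 0 < ε → ∃ y : X, ‖y‖ = 1 ∧ ∀ i, ‖x i - y‖ < r + ε}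

/-- The thickness index `T(X)` of a normed space. -/
noncomputable def thickness (X : Type*) [NormedAddCommGroup X] : ℝ :=
  sInf {r : ℝ | 0 < r ∧ ∃ (n : ℕ) (x : Fin n → X), (∀ i, ‖x i‖ = 1) ∧
    Metric.closedBall (0 : X) 1 ⊆ ⋃ i, Metric.closedBall (x i) r}

/-- A subspace `Y` of `X` is an almost isometric ideal (ai-ideal) in `X` if for every
`ε > 0` and every finite-dimensional subspace `E ⊆ X` there is a linear map `T : E → Y`
fixing `Y ∩ E` pointwise with `(1+ε)⁻¹ ‖e‖ ≤ ‖T e‖ ≤ (1+ε) ‖e‖` for all `e ∈ E`. -/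
def IsAIIdeal (X : Type*) [NormedAddCommGroup X] [NormedSpace ℝ X]
    (Y : Subspace ℝ X) : Prop :=
  ∀ ε : ℝ, 0 < ε → ∀ E : Subspace ℝ X, FiniteDimensional ℝ E →
    ∃ T : E →ₗ[ℝ] Y, (∀ e : E, (e : X) ∈ Y → ((T e : Y) : X) = (e : X)) ∧
      ∀ e : E, (1 + ε)⁻¹ * ‖(e : X)‖ ≤ ‖((T e : Y) : X)‖ ∧
        ‖((T e : Y) : X)‖ ≤ (1 + ε) * ‖(e : X)‖


/-- Transfer lemma for thickness: a covering radius for `Y` gives radius `r + δ` for `X`. -/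
theorem thickness_transfer {X : Type*} [NormedAddCommGroup X] [NormedSpace ℝ X]
    {Y : Subspace ℝ X} (hY : IsAIIdeal X Y) {r δ : ℝ} (hδ : 0 < δ)
    (hr : 0 < r) {n : ℕ} {y : Fin n → Y} (hy : ∀ i, ‖y i‖ = 1)
    (hcov : Metric.closedBall (0 : Y) 1 ⊆ ⋃ i, Metric.closedBall (y i) r) :
    Metric.closedBall (0 : X) 1 ⊆ ⋃ i, Metric.closedBall ((y i : X)) (r + δ) := by
  set ε : ℝ := min 1 (δ / (r + 2)) with hεdef
  have hε : 0 < ε := lt_min one_pos (div_pos hδ (by linarith))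
  have hε1 : ε ≤ 1 := min_le_left _ _
  have hε2 : ε * (r + 2) ≤ δ := by
    have := min_le_right 1 (δ / (r + 2))
    calc ε * (r + 2) ≤ (δ / (r + 2)) * (r + 2) := by nlinarith
    _ = δ := by field_simp
  intro x hx
  rw [Metric.mem_closedBall, dist_zero_right] at hx
  set E : Subspace ℝ X := Submodule.span ℝ (insert x (Set.range fun i => (y i : X))) with hE
  haveI : FiniteDimensional ℝ E :=
    FiniteDimensional.span_of_finite ℝ ((Set.finite_range _).insert x)
  obtain ⟨T, hfix, hbd⟩ := hY ε hε E inferInstance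
  have hxE : x ∈ E := Submodule.subset_span (Set.mem_insert _ _)
  have hyE : ∀ i, (y i : X) ∈ E := fun i =>
    Submodule.subset_span (Set.mem_insert_iff.2 (Or.inr ⟨i, rfl⟩))
  set xE : E := ⟨x, hxE⟩
  set w : Y := T xE with hw
  have hwle : ‖(w : X)‖ ≤ 1 + ε := by
    have := (hbd xE).2
    calc ‖(w : X)‖ ≤ (1 + ε) * ‖x‖ := this
    _ ≤ (1 + ε) * 1 := by nlinarith
    _ = 1 + ε := mul_one _
  set z : Y := (1 + ε)⁻¹ • w with hz
  have hzball : z ∈ Metric.closedBall (0 : Y) 1 := by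
    rw [Metric.mem_closedBall, dist_zero_right, hz, norm_smul, Real.norm_eq_abs,
      abs_of_pos (inv_pos.2 (by linarith : (0:ℝ) < 1 + ε))]
    rw [inv_mul_le_iff₀ (by linarith : (0:ℝ) < 1 + ε)]
    simpa using hwle
  obtain ⟨s, ⟨i, rfl⟩, hzi⟩ := hcov hzball
  rw [Metric.mem_closedBall, Subtype.dist_eq, dist_eq_norm] at hzi
  -- T fixes y i
  have hTy : T ⟨(y i : X), hyE i⟩ = y i := by
    ext
    exact hfix ⟨(y i : X), hyE i⟩ (y i).2
  have hTsub : ((T (xE - ⟨(y i : X), hyE i⟩) : Y) : X) = (w : X) - (y i : X) := by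
    rw [map_sub, hTy]; rfl
  have hlow := (hbd (xE - ⟨(y i : X), hyE i⟩)).1
  rw [hTsub] at hlow
  have hcoe : ((xE - ⟨(y i : X), hyE i⟩ : E) : X) = x - (y i : X) := rfl
  rw [hcoe] at hlow
  have hwz : ‖(w : X) - (z : X)‖ ≤ ε := by
    have h1 : (z : X) = (1 + ε)⁻¹ • (w : X) := rfl
    have h2 : (w : X) - (1 + ε)⁻¹ • (w : X) = (1 - (1 + ε)⁻¹) • (w : X) := by
      rw [sub_smul, one_smul]
    have h3 : (0:ℝ) ≤ 1 - (1 + ε)⁻¹ := by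
      rw [sub_nonneg]
      exact inv_le_one_of_one_le₀ (by linarith)
    rw [h1, h2, norm_smul, Real.norm_eq_abs, abs_of_nonneg h3]
    have h4 : 1 - (1 + ε)⁻¹ = ε / (1 + ε) := by field_simp; ring
    rw [h4]
    calc ε / (1 + ε) * ‖(w : X)‖ ≤ ε / (1 + ε) * (1 + ε) := by
          apply mul_le_mul_of_nonneg_left hwle
          positivity
    _ = ε := by field_simp
  have hwy : ‖(w : X) - (y i : X)‖ ≤ ε + r := by
    calc ‖(w : X) - (y i : X)‖ ≤ ‖(w : X) - (z : X)‖ + ‖(z : X) - (y i : X)‖ := by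
          have := norm_sub_le_norm_sub_add_norm_sub (w : X) (z : X) ((y i : X))
          exact this
    _ ≤ ε + r := add_le_add hwz hzi
  have hfinal : ‖x - (y i : X)‖ ≤ r + δ := by
    have h5 : ‖x - (y i : X)‖ ≤ (1 + ε) * ‖(w : X) - (y i : X)‖ := by
      rw [inv_mul_le_iff₀ (by linarith : (0:ℝ) < 1 + ε)] at hlow
      linarith [hlow]
    calc ‖x - (y i : X)‖ ≤ (1 + ε) * (ε + r) := by
          apply h5.trans
          apply mul_le_mul_of_nonneg_left hwy (by linarith)
    _ ≤ r + δ := by nlinarith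
  exact Set.mem_iUnion.2 ⟨i, by rwa [Metric.mem_closedBall, dist_eq_norm]⟩

set_option maxHeartbeats 2000000 in
/-- Transfer lemma for thinness: radius `r` for `X` gives radius `r + δ` for `Y`. -/
theorem thinness_transfer {X : Type*} [NormedAddCommGroup X] [NormedSpace ℝ X]
    {Y : Subspace ℝ X} (hY : IsAIIdeal X Y) {r δ : ℝ} (hδ : 0 < δ) (hr : 0 < r)
    (hX : ∀ (n : ℕ) (x : Fin n → X), (∀ i, ‖x i‖ = 1) →
      ∀ ε : ℝ, 0 < ε → ∃ y : X, ‖y‖ = 1 ∧ ∀ i, ‖x i - y‖ < r + ε)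
    (n : ℕ) (y : Fin n → Y) (hy : ∀ i, ‖y i‖ = 1) (ε : ℝ) (hε : 0 < ε) :
    ∃ z : Y, ‖z‖ = 1 ∧ ∀ i, ‖y i - z‖ < r + δ + ε := by
  set γ : ℝ := min 1 (δ / (r + 3)) with hγdef
  have hγ : 0 < γ := lt_min one_pos (div_pos hδ (by linarith))
  have hγ1 : γ ≤ 1 := min_le_left _ _
  have hγ2 : γ * (r + 3) ≤ δ := by
    have := min_le_right 1 (δ / (r + 3))
    calc γ * (r + 3) ≤ (δ / (r + 3)) * (r + 3) := by nlinarith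
    _ = δ := by field_simp
  have hyX : ∀ i, ‖((y i : Y) : X)‖ = 1 := fun i => hy i
  obtain ⟨x, hx1, hx2⟩ := hX n (fun i => (y i : X)) hyX γ hγ
  set E : Subspace ℝ X := Submodule.span ℝ (insert x (Set.range fun i => (y i : X))) with hE
  haveI : FiniteDimensional ℝ E :=
    FiniteDimensional.span_of_finite ℝ ((Set.finite_range _).insert x)
  obtain ⟨T, hfix, hbd⟩ := hY γ hγ E inferInstance
  have hxE : x ∈ E := Submodule.subset_span (Set.mem_insert _ _)
  have hyE : ∀ i, (y i : X) ∈ E := fun i =>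
    Submodule.subset_span (Set.mem_insert_iff.2 (Or.inr ⟨i, rfl⟩))
  set xE : E := ⟨x, hxE⟩
  set w : Y := T xE with hw
  have hwlow : (1 + γ)⁻¹ ≤ ‖(w : X)‖ := by
    have := (hbd xE).1
    calc (1 + γ)⁻¹ = (1 + γ)⁻¹ * ‖x‖ := by rw [hx1, mul_one]
    _ ≤ ‖(w : X)‖ := this
  have hwup : ‖(w : X)‖ ≤ 1 + γ := by
    have := (hbd xE).2
    calc ‖(w : X)‖ ≤ (1 + γ) * ‖x‖ := this
    _ = 1 + γ := by rw [hx1, mul_one]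
  have hwpos : 0 < ‖(w : X)‖ := lt_of_lt_of_le (by positivity) hwlow
  have hwY : ‖w‖ = ‖(w : X)‖ := rfl
  set z : Y := ‖w‖⁻¹ • w with hz
  have hz1 : ‖z‖ = 1 := by
    rw [hz, norm_smul, Real.norm_eq_abs, abs_of_pos (inv_pos.2 (hwY ▸ hwpos))]
    rw [inv_mul_cancel₀ (hwY ▸ hwpos).ne']
  refine ⟨z, hz1, fun i => ?_⟩
  -- ‖y i - w‖ ≤ (1+γ) * ‖y i - x‖
  have hTy : T ⟨(y i : X), hyE i⟩ = y i := by
    ext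
    exact hfix ⟨(y i : X), hyE i⟩ (y i).2
  have hTsub : ((T (⟨(y i : X), hyE i⟩ - xE) : Y) : X) = (y i : X) - (w : X) := by
    rw [map_sub, hTy]; rfl
  have hup := (hbd (⟨(y i : X), hyE i⟩ - xE)).2
  rw [hTsub] at hup
  have hcoe : ((⟨(y i : X), hyE i⟩ - xE : E) : X) = (y i : X) - x := rfl
  rw [hcoe] at hup
  have h1 : ‖(y i : X) - (w : X)‖ ≤ (1 + γ) * (r + γ) := by
    apply hup.trans
    apply mul_le_mul_of_nonneg_left (hx2 i).le (by linarith)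
  -- ‖w - z‖ = |‖w‖ - 1| ≤ γ
  have h2 : ‖(w : X) - (z : X)‖ ≤ γ := by
    have hzx : (z : X) = ‖(w : X)‖⁻¹ • (w : X) := by rw [hz]; rw [hwY]; rfl
    have h3 : (w : X) - ‖(w : X)‖⁻¹ • (w : X) = (1 - ‖(w : X)‖⁻¹) • (w : X) := by
      rw [sub_smul, one_smul]
    rw [hzx, h3, norm_smul, Real.norm_eq_abs]
    have ha : |1 - ‖(w : X)‖⁻¹| * ‖(w : X)‖ = |‖(w : X)‖ - 1| := by
      rw [← abs_of_pos hwpos, ← abs_mul]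
      congr 1
      field_simp
      rw [abs_of_pos hwpos]; ring
    rw [ha, abs_le]
    have h5 : 1 ≤ ‖(w : X)‖ * (1 + γ) := by
      have := mul_le_mul_of_nonneg_right hwlow (by linarith : (0:ℝ) ≤ 1 + γ)
      rwa [inv_mul_cancel₀ (by linarith : (1:ℝ) + γ ≠ 0)] at this
    constructor
    · nlinarith [h5, sq_nonneg γ]
    · linarith
  have h4 : ‖(y i : Y) - z‖ ≤ ‖(y i : X) - (w : X)‖ + ‖(w : X) - (z : X)‖ := by
    have : ((y i - z : Y) : X) = (y i : X) - (z : X) := rfl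
    calc ‖(y i : Y) - z‖ = ‖(y i : X) - (z : X)‖ := by rw [← this]; rfl
    _ ≤ _ := norm_sub_le_norm_sub_add_norm_sub _ _ _
  calc ‖y i - z‖ ≤ (1 + γ) * (r + γ) + γ := by linarith
  _ ≤ r + δ := by nlinarith
  _ < r + δ + ε := by linarith

/-- If `Y` is an ai-ideal in `X`, then `T(X) ≤ T(Y)` and `t(Y) ≤ t(X)`. -/
theorem thinness_thickness_of_aiIdeal
    (X : Type*) [NormedAddCommGroup X] [NormedSpace ℝ X] [CompleteSpace X]
    (Y : Subspace ℝ X) [Nontrivial Y] (hYc : IsClosed (Y : Set X))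
    (hY : IsAIIdeal X Y) :
    thickness X ≤ thickness Y ∧ thinness Y ≤ thinness X := by
  obtain ⟨y0, hy0⟩ := exists_ne (0 : Y)
  have hy0n : ‖y0‖ ≠ 0 := norm_ne_zero_iff.2 hy0
  have hy0p : 0 < ‖y0‖ := norm_pos_iff.2 hy0
  set uY : Y := ‖y0‖⁻¹ • y0 with huY
  have huY1 : ‖uY‖ = 1 := by
    rw [huY, norm_smul, Real.norm_eq_abs, abs_of_pos (inv_pos.2 hy0p)]
    exact inv_mul_cancel₀ hy0n
  have huX1 : ‖(uY : X)‖ = 1 := huY1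
  constructor
  · -- thickness X ≤ thickness Y
    rw [thickness, thickness]
    apply le_csInf
    · refine ⟨2, two_pos, 1, fun _ => uY, fun _ => huY1, ?_⟩
      intro z hz
      refine Set.mem_iUnion.2 ⟨0, ?_⟩
      rw [Metric.mem_closedBall]
      have h1 : dist z (0 : Y) ≤ 1 := Metric.mem_closedBall.1 hz
      have h2 : dist (0 : Y) uY = 1 := by rw [dist_zero_left, huY1]
      calc dist z uY ≤ dist z 0 + dist 0 uY := dist_triangle _ _ _
      _ ≤ 2 := by linarith
    · rintro r ⟨hrpos, n, y, hy, hcov⟩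
      apply le_of_forall_pos_le_add
      intro δ hδ
      refine csInf_le ⟨0, fun a ha => ha.1.le⟩
        ⟨by linarith, n, fun i => (y i : X), fun i => hy i, ?_⟩
      exact thickness_transfer hY hδ hrpos hy hcov
  · -- thinness Y ≤ thinness X
    rw [thinness, thinness]
    apply le_csInf
    · refine ⟨2, two_pos, fun n x hx ε hε => ?_⟩
      cases n with
      | zero => exact ⟨(uY : X), huX1, fun i => i.elim0⟩
      | succ m =>
        refine ⟨x 0, hx 0, fun i => ?_⟩
        have := norm_sub_le (x i) (x 0)
        rw [hx i, hx 0] at this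
        linarith
    · rintro r ⟨hrpos, hXprop⟩
      apply le_of_forall_pos_le_add
      intro δ hδ
      refine csInf_le ⟨0, fun a ha => ha.1.le⟩ ⟨by linarith, fun n y hy ε hε => ?_⟩
      exact thinness_transfer hY hδ hrpos hXprop n y hy ε hε
end

section
/- Let X be a nonzero real Banach space which is an ai-ideal in every superspace, i.e., for every real Banach space Z and every isometric linear embedding of X into Z, the image of X is an ai-ideal in Z (by a theorem of Abrahamsen–Lima–Nygaard this property characterizes the Gurariĭ spaces). Then T(X) = 2 and t(X) = 1. -/
noncomputable def Jinf (X : Type) [NormedAddCommGroup X] [NormedSpace ℝ X] :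
    X →ₗᵢ[ℝ] X × ℝ where
  toLinearMap := LinearMap.inl ℝ X ℝ
  norm_map' x := by simp [Prod.norm_def]

noncomputable def Jone (X : Type) [NormedAddCommGroup X] [NormedSpace ℝ X] :
    X →ₗᵢ[ℝ] WithLp 1 (X × ℝ) where
  toLinearMap := (WithLp.linearEquiv 1 ℝ (X × ℝ)).symm.toLinearMap.comp (LinearMap.inl ℝ X ℝ)
  norm_map' x := by
    rw [WithLp.prod_norm_eq_add (by norm_num)]
    simp

lemma thin_key (X : Type) [NormedAddCommGroup X] [NormedSpace ℝ X] [CompleteSpace X]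
    (hX : ∀ (Z : Type) [NormedAddCommGroup Z] [NormedSpace ℝ Z] [CompleteSpace Z]
      (J : X →ₗᵢ[ℝ] Z), IsAIIdeal Z (LinearMap.range J.toLinearMap))
    (δ : ℝ) (hδ : 0 < δ) (n : ℕ) (x : Fin n → X) (hx : ∀ i, ‖x i‖ = 1) :
    ∃ y : X, ‖y‖ = 1 ∧ ∀ i, ‖x i - y‖ ≤ 1 + 2 * δ := by
  classical
  set Z := X × ℝ
  set J := Jinf X with hJ
  set e : Z := (0, 1) with he_def
  set E := Submodule.span ℝ (insert e (Set.range fun i => J (x i))) with hE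
  haveI : FiniteDimensional ℝ E :=
    FiniteDimensional.span_of_finite ℝ ((Set.finite_range _).insert e)
  obtain ⟨T, hfix, hnorm⟩ := hX Z J δ hδ E inferInstance
  set e' : E := ⟨e, Submodule.subset_span (Set.mem_insert _ _)⟩ with he'
  set z : Z := ((T e' : LinearMap.range J.toLinearMap) : Z) with hz_def
  obtain ⟨y₀, hy₀⟩ := (T e').2
  have hJy₀ : J y₀ = z := hy₀
  have heq : ‖(e' : Z)‖ = 1 := by simp [he', he_def, Prod.norm_def]
  have hz1 : (1 + δ)⁻¹ ≤ ‖z‖ := by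
    have := (hnorm e').1; rw [heq] at this; simpa using this
  have hz2 : ‖z‖ ≤ 1 + δ := by
    have := (hnorm e').2; rw [heq] at this; simpa using this
  have hy₀n : ‖y₀‖ = ‖z‖ := by rw [← hJy₀, J.norm_map]
  have hy₀pos : 0 < ‖y₀‖ := by
    rw [hy₀n]; exact lt_of_lt_of_le (by positivity) hz1
  refine ⟨‖y₀‖⁻¹ • y₀, ?_, ?_⟩
  · rw [norm_smul, norm_inv, norm_norm, inv_mul_cancel₀ hy₀pos.ne']
  intro i
  set xi' : E := ⟨J (x i), Submodule.subset_span
    (Set.mem_insert_of_mem _ (Set.mem_range_self i))⟩ with hxi'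
  have hfixi : ((T xi' : LinearMap.range J.toLinearMap) : Z) = J (x i) :=
    hfix xi' ⟨x i, rfl⟩
  have hsub : ((T (xi' - e') : LinearMap.range J.toLinearMap) : Z) = J (x i) - z := by
    rw [map_sub, Submodule.coe_sub, hfixi]
  have hdiffnorm : ‖((xi' - e' : E) : Z)‖ = 1 := by
    simp only [Submodule.coe_sub, hxi', he', he_def]
    rw [Prod.norm_def]
    simp [hJ, Jinf, Prod.sub_def, hx i]
  have hbound : ‖J (x i) - z‖ ≤ 1 + δ := by
    have := (hnorm (xi' - e')).2
    rw [hsub, hdiffnorm] at this; simpa using this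
  have hxy₀ : ‖x i - y₀‖ ≤ 1 + δ := by
    rw [← J.norm_map, map_sub, hJy₀]; exact hbound
  have hy₀close : |‖y₀‖ - 1| ≤ δ := by
    rw [abs_le]
    constructor
    · have h1 : (1 + δ)⁻¹ ≤ ‖y₀‖ := hy₀n ▸ hz1
      have h2 : 1 - (1 + δ)⁻¹ ≤ δ := by
        have hpos : (0:ℝ) < 1 + δ := by positivity
        have hmul : (1 + δ)⁻¹ * (1 + δ) = 1 := inv_mul_cancel₀ hpos.ne'
        nlinarith [inv_pos.mpr hpos]
      linarith
    · have := hy₀n ▸ hz2; linarith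
  have hnormdiff : ‖y₀ - ‖y₀‖⁻¹ • y₀‖ = |‖y₀‖ - 1| := by
    have : y₀ - ‖y₀‖⁻¹ • y₀ = (1 - ‖y₀‖⁻¹) • y₀ := by
      rw [sub_smul, one_smul]
    rw [this, norm_smul, Real.norm_eq_abs]
    rw [abs_sub_comm, show |‖y₀‖⁻¹ - 1| = |1 - ‖y₀‖|/‖y₀‖ from ?_]
    · field_simp
      rw [abs_sub_comm]
    · rw [← abs_of_pos (show (0:ℝ) < ‖y₀‖ from hy₀pos), ← abs_div]
      congr 1
      field_simp
      rw [abs_norm]; ring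
  calc ‖x i - ‖y₀‖⁻¹ • y₀‖ ≤ ‖x i - y₀‖ + ‖y₀ - ‖y₀‖⁻¹ • y₀‖ := norm_sub_le_norm_sub_add_norm_sub _ _ _
    _ ≤ (1 + δ) + δ := by rw [hnormdiff]; exact add_le_add hxy₀ hy₀close
    _ = 1 + 2 * δ := by ring

lemma thick_key (X : Type) [NormedAddCommGroup X] [NormedSpace ℝ X] [CompleteSpace X]
    (hX : ∀ (Z : Type) [NormedAddCommGroup Z] [NormedSpace ℝ Z] [CompleteSpace Z]
      (J : X →ₗᵢ[ℝ] Z), IsAIIdeal Z (LinearMap.range J.toLinearMap))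
    (δ : ℝ) (hδ : 0 < δ) (n : ℕ) (x : Fin n → X) (hx : ∀ i, ‖x i‖ = 1) :
    ∃ w : X, ‖w‖ ≤ 1 ∧ ∀ i, 2 * (1 + δ)⁻¹ - δ ≤ ‖x i - w‖ := by
  classical
  set Z := WithLp 1 (X × ℝ)
  set J := Jone X with hJ
  set e : Z := (WithLp.linearEquiv 1 ℝ (X × ℝ)).symm ((0:X), (1:ℝ)) with he_def
  set E := Submodule.span ℝ (insert e (Set.range fun i => J (x i))) with hE
  haveI : FiniteDimensional ℝ E :=
    FiniteDimensional.span_of_finite ℝ ((Set.finite_range _).insert e)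
  obtain ⟨T, hfix, hnorm⟩ := hX Z J δ hδ E inferInstance
  set e' : E := ⟨e, Submodule.subset_span (Set.mem_insert _ _)⟩ with he'
  set z : Z := ((T e' : LinearMap.range J.toLinearMap) : Z) with hz_def
  obtain ⟨y₀, hy₀⟩ := (T e').2
  have hJy₀ : J y₀ = z := hy₀
  have heq : ‖(e' : Z)‖ = 1 := by
    show ‖e‖ = 1
    rw [he_def, WithLp.prod_norm_eq_add (by norm_num)]
    simp
  have hz2 : ‖z‖ ≤ 1 + δ := by
    have := (hnorm e').2; rw [heq] at this; simpa using this
  have hy₀n : ‖y₀‖ = ‖z‖ := by rw [← hJy₀, J.norm_map]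
  set c : ℝ := max 1 ‖y₀‖ with hc
  have hc1 : 1 ≤ c := le_max_left _ _
  have hcpos : 0 < c := lt_of_lt_of_le one_pos hc1
  refine ⟨c⁻¹ • y₀, ?_, ?_⟩
  · rw [norm_smul, norm_inv, Real.norm_eq_abs, abs_of_pos hcpos]
    rw [inv_mul_le_iff₀ hcpos, mul_one]
    exact le_max_right _ _
  intro i
  set xi' : E := ⟨J (x i), Submodule.subset_span
    (Set.mem_insert_of_mem _ (Set.mem_range_self i))⟩ with hxi'
  have hfixi : ((T xi' : LinearMap.range J.toLinearMap) : Z) = J (x i) :=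
    hfix xi' ⟨x i, rfl⟩
  have hsub : ((T (xi' - e') : LinearMap.range J.toLinearMap) : Z) = J (x i) - z := by
    rw [map_sub, Submodule.coe_sub, hfixi]
  have hdiffnorm : ‖((xi' - e' : E) : Z)‖ = 2 := by
    show ‖J (x i) - e‖ = 2
    have h1 : J (x i) - e = (WithLp.equiv 1 (X × ℝ)).symm ((x i, 0) - ((0:X), (1:ℝ))) := by
      rw [WithLp.equiv_symm_apply, WithLp.toLp_sub]; rfl
    rw [h1, Prod.mk_sub_mk, sub_zero, zero_sub, WithLp.prod_norm_eq_add (by norm_num)]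
    simp [WithLp.equiv_symm_apply, WithLp.toLp_fst, WithLp.toLp_snd, hx i]
    norm_num
  have hbound : 2 * (1 + δ)⁻¹ ≤ ‖J (x i) - z‖ := by
    have := (hnorm (xi' - e')).1
    rw [hsub, hdiffnorm] at this; linarith [this]
  have hxy₀ : 2 * (1 + δ)⁻¹ ≤ ‖x i - y₀‖ := by
    rw [← J.norm_map, map_sub, hJy₀] at *; exact hbound
  have hymw : ‖y₀ - c⁻¹ • y₀‖ ≤ δ := by
    have heq2 : y₀ - c⁻¹ • y₀ = (1 - c⁻¹) • y₀ := by rw [sub_smul, one_smul]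
    rw [heq2, norm_smul, Real.norm_eq_abs]
    have hcinv : c⁻¹ ≤ 1 := by
      rw [inv_le_one_iff₀]; right; exact hc1
    have hcinvpos : 0 < c⁻¹ := inv_pos.mpr hcpos
    rw [abs_of_nonneg (by linarith)]
    rcases le_total ‖y₀‖ 1 with h | h
    · have : c = 1 := max_eq_left h
      rw [this]; simp [hδ.le]
    · have hceq : c = ‖y₀‖ := max_eq_right h
      rw [hceq]
      have : (1 - ‖y₀‖⁻¹) * ‖y₀‖ = ‖y₀‖ - 1 := by
        have := hy₀n ▸ hz2
        field_simp
      rw [this]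
      have := hy₀n ▸ hz2
      linarith
  calc 2 * (1 + δ)⁻¹ - δ ≤ ‖x i - y₀‖ - ‖y₀ - c⁻¹ • y₀‖ := by linarith
    _ ≤ ‖x i - c⁻¹ • y₀‖ := by
        have h1 := norm_sub_le_norm_sub_add_norm_sub (x i) (c⁻¹ • y₀) y₀
        have h2 : ‖c⁻¹ • y₀ - y₀‖ = ‖y₀ - c⁻¹ • y₀‖ := norm_sub_rev _ _
        linarith

/-- A nonzero Banach space which is an ai-ideal in every superspace (i.e. a Gurariĭ space)
has thickness index `2` and thinness index `1`. -/
theorem thickness_thinness_of_aiIdeal_in_every_superspace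
    (X : Type) [NormedAddCommGroup X] [NormedSpace ℝ X] [CompleteSpace X] [Nontrivial X]
    (hX : ∀ (Z : Type) [NormedAddCommGroup Z] [NormedSpace ℝ Z] [CompleteSpace Z]
      (J : X →ₗᵢ[ℝ] Z), IsAIIdeal Z (LinearMap.range J.toLinearMap)) :
    thickness X = 2 ∧ thinness X = 1 := by
  obtain ⟨x₀, hx₀⟩ := exists_norm_eq X (zero_le_one)
  constructor
  · -- thickness = 2
    have hmem : ∀ r : ℝ, 2 ≤ r → r ∈ {r : ℝ | 0 < r ∧ ∃ (n : ℕ) (x : Fin n → X),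
        (∀ i, ‖x i‖ = 1) ∧ Metric.closedBall (0 : X) 1 ⊆ ⋃ i, Metric.closedBall (x i) r} := by
      intro r hr
      refine ⟨by linarith, 1, fun _ => x₀, fun _ => hx₀, ?_⟩
      intro y hy
      rw [Set.mem_iUnion]
      refine ⟨0, ?_⟩
      rw [Metric.mem_closedBall, dist_eq_norm]
      calc ‖y - x₀‖ ≤ ‖y‖ + ‖x₀‖ := norm_sub_le _ _
        _ ≤ 1 + 1 := by
            have := Metric.mem_closedBall.mp hy
            rw [dist_zero_right] at this
            linarith [hx₀.le]
        _ ≤ r := by linarith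
    have hlb : ∀ r ∈ {r : ℝ | 0 < r ∧ ∃ (n : ℕ) (x : Fin n → X),
        (∀ i, ‖x i‖ = 1) ∧ Metric.closedBall (0 : X) 1 ⊆ ⋃ i, Metric.closedBall (x i) r},
        (2:ℝ) ≤ r := by
      rintro r ⟨hr, n, x, hx, hcov⟩
      refine le_of_forall_pos_le_add ?_
      intro η hη
      set δ : ℝ := min 1 (η / (2 + r)) with hδdef
      have hδpos : 0 < δ := lt_min one_pos (by positivity)
      have hδ1 : δ ≤ 1 := min_le_left _ _
      have hδ2 : δ * (2 + r) ≤ η := by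
        rw [← le_div_iff₀ (by positivity)]
        exact min_le_right _ _
      obtain ⟨w, hw, hwd⟩ := thick_key X hX δ hδpos n x hx
      have hwmem : w ∈ Metric.closedBall (0 : X) 1 := by
        rw [Metric.mem_closedBall, dist_zero_right]; exact hw
      obtain ⟨i, hi⟩ := Set.mem_iUnion.mp (hcov hwmem)
      rw [Metric.mem_closedBall, dist_eq_norm, norm_sub_rev] at hi
      have h1 : 2 * (1 + δ)⁻¹ - δ ≤ r := le_trans (hwd i) hi
      have h2 : (1 + δ) * (1 + δ)⁻¹ = 1 := mul_inv_cancel₀ (by positivity)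
      nlinarith [inv_pos.mpr (show (0:ℝ) < 1 + δ by positivity)]
    rw [thickness]
    refine le_antisymm (csInf_le ⟨2, hlb⟩ (hmem 2 le_rfl)) (le_csInf ⟨2, hmem 2 le_rfl⟩ hlb)
  · -- thinness = 1
    have hmem : ∀ r : ℝ, 1 < r → r ∈ {r : ℝ | 0 < r ∧ ∀ (n : ℕ) (x : Fin n → X),
        (∀ i, ‖x i‖ = 1) → ∀ ε : ℝ, 0 < ε → ∃ y : X, ‖y‖ = 1 ∧ ∀ i, ‖x i - y‖ < r + ε} := by
      intro r hr
      refine ⟨by linarith, ?_⟩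
      intro n x hx ε hε
      obtain ⟨y, hy, hyd⟩ := thin_key X hX ((r - 1) / 2) (by linarith) n x hx
      exact ⟨y, hy, fun i => lt_of_le_of_lt (hyd i) (by linarith)⟩
    have hlb : ∀ r ∈ {r : ℝ | 0 < r ∧ ∀ (n : ℕ) (x : Fin n → X),
        (∀ i, ‖x i‖ = 1) → ∀ ε : ℝ, 0 < ε → ∃ y : X, ‖y‖ = 1 ∧ ∀ i, ‖x i - y‖ < r + ε},
        (1:ℝ) ≤ r := by
      rintro r ⟨hr, hprop⟩
      refine le_of_forall_pos_le_add ?_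
      intro η hη
      obtain ⟨y, hy, hyd⟩ := hprop 2 ![x₀, -x₀]
        (by intro i; fin_cases i <;> simp [hx₀]) η hη
      have h0 := hyd 0
      have h1 := hyd 1
      simp only [Matrix.cons_val_zero, Matrix.cons_val_one, Matrix.head_cons] at h0 h1
      have key : (2:ℝ) ≤ ‖x₀ - y‖ + ‖-x₀ - y‖ := by
        have : x₀ - y - (-x₀ - y) = (2:ℝ) • x₀ := by module
        calc (2:ℝ) = ‖(2:ℝ) • x₀‖ := by rw [norm_smul, hx₀]; simp
          _ = ‖x₀ - y - (-x₀ - y)‖ := by rw [this]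
          _ ≤ ‖x₀ - y‖ + ‖-x₀ - y‖ := norm_sub_le _ _
      linarith
    rw [thinness]
    refine le_antisymm ?_ (le_csInf ⟨2, hmem 2 one_lt_two⟩ hlb)
    refine le_of_forall_pos_le_add ?_
    intro η hη
    exact csInf_le ⟨1, hlb⟩ (hmem (1 + η) (by linarith))
end

section
/- Let X be a nonzero real Banach space which is a Lindenstrauss space and whose closed unit ball B_X has at least one extreme point. Then t(X) = 2. -/
/-- A Banach space is a Lindenstrauss space if its dual is isometrically isomorphic to
`L¹(μ)` for some measure `μ`. -/
def IsLindenstrauss (X : Type*) [NormedAddCommGroup X] [NormedSpace ℝ X] : Prop :=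
  ∃ (α : Type) (_ : MeasurableSpace α) (μ : MeasureTheory.Measure α),
    Nonempty (StrongDual ℝ X ≃ₗᵢ[ℝ] MeasureTheory.Lp ℝ 1 μ)

open MeasureTheory

section Aux

variable {X : Type*} [NormedAddCommGroup X] [NormedSpace ℝ X]
  {α : Type} [MeasurableSpace α] {μ : Measure α}


lemma Lp_coeFn_finset_sum {α : Type} [MeasurableSpace α] {μ : Measure α}
    {ι : Type*} (s : Finset ι) (F : ι → Lp ℝ 1 μ) :
    ⇑(∑ i ∈ s, F i) =ᵐ[μ] fun ω => ∑ i ∈ s, F i ω := by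
  classical
  induction s using Finset.induction_on with
  | empty =>
    simp only [Finset.sum_empty]
    exact Lp.coeFn_zero (E := ℝ) (p := 1) (μ := μ)
  | insert a s hnotmem ih =>
    have h1 := Lp.coeFn_add (F a) (∑ i ∈ s, F i)
    rw [Finset.sum_insert hnotmem]
    filter_upwards [h1, ih] with ω hω1 hω2
    rw [hω1, Pi.add_apply, hω2, Finset.sum_insert hnotmem]

lemma flow_bound {X : Type*} [NormedAddCommGroup X] [NormedSpace ℝ X]
    {α : Type} [MeasurableSpace α] {μ : Measure α}
    (T : StrongDual ℝ X ≃ₗᵢ[ℝ] Lp ℝ 1 μ)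
    {n : ℕ} (ψ : Fin n → StrongDual ℝ X) (hsum : ∑ i, ψ i = 0)
    (x : Fin n → X) (r : Fin n → ℝ) (hr : ∀ i, 0 ≤ r i)
    (hpair : ∀ i j, ‖x i - x j‖ ≤ r i + r j) :
    ∑ i, (ψ i) (x i) ≤ ∑ i, ‖ψ i‖ * r i := by
  classical
  set g : Fin n → Lp ℝ 1 μ := fun i => T (ψ i) with hg
  have hgsum : (∑ i, g i) = 0 := by
    rw [← map_sum, hsum, map_zero]
  set f : Fin n → α → ℝ := fun i => ⇑(g i) with hf
  have hint : ∀ i, Integrable (f i) μ := fun i => L1.integrable_coeFn (g i)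
  -- a.e. sum is zero
  have hae : ∀ᵐ ω ∂μ, ∑ i, f i ω = 0 := by
    have h1 := Lp_coeFn_finset_sum (Finset.univ : Finset (Fin n)) g
    rw [hgsum] at h1
    have h0 := Lp.coeFn_zero (E := ℝ) (p := 1) (μ := μ)
    filter_upwards [h1, h0] with ω hω1 hω2
    rw [← hω1, hω2]
    rfl
  -- pointwise constructions
  set fp : Fin n → α → ℝ := fun i ω => max (f i ω) 0 with hfp
  set fm : Fin n → α → ℝ := fun i ω => max (-(f i ω)) 0 with hfm
  set P : α → ℝ := fun ω => ∑ i, fp i ω with hP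
  set c : Fin n → Fin n → α → ℝ := fun i j ω => fp i ω * fm j ω / P ω with hc
  set h : Fin n → Fin n → α → ℝ := fun i j ω => c i j ω - c j i ω with hh
  have hfp_nonneg : ∀ i ω, 0 ≤ fp i ω := fun i ω => le_max_right _ _
  have hfm_nonneg : ∀ i ω, 0 ≤ fm i ω := fun i ω => le_max_right _ _
  have hP_nonneg : ∀ ω, 0 ≤ P ω := fun ω => Finset.sum_nonneg fun i _ => hfp_nonneg i ω
  have hfp_le_P : ∀ i ω, fp i ω ≤ P ω := fun i ω =>
    Finset.single_le_sum (fun k _ => hfp_nonneg k ω) (Finset.mem_univ i)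
  have hc_nonneg : ∀ i j ω, 0 ≤ c i j ω := fun i j ω =>
    div_nonneg (mul_nonneg (hfp_nonneg i ω) (hfm_nonneg j ω)) (hP_nonneg ω)
  have hc_le : ∀ i j ω, c i j ω ≤ fm j ω := by
    intro i j ω
    rcases eq_or_lt_of_le (hP_nonneg ω) with hP0 | hP0
    · simp only [hc, ← hP0, div_zero]
      exact hfm_nonneg j ω
    · rw [hc, div_le_iff₀ hP0]
      calc fp i ω * fm j ω ≤ P ω * fm j ω :=
            mul_le_mul_of_nonneg_right (hfp_le_P i ω) (hfm_nonneg j ω)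
        _ = fm j ω * P ω := mul_comm _ _
  have hfm_le_abs : ∀ j ω, fm j ω ≤ |f j ω| := fun j ω =>
    max_le (neg_le_abs _) (abs_nonneg _)
  -- measurability
  have hfmeas : ∀ i, AEMeasurable (f i) μ := fun i => (hint i).1.aemeasurable
  have hfpmeas : ∀ i, AEMeasurable (fp i) μ := fun i => (hfmeas i).max aemeasurable_const
  have hfmmeas : ∀ i, AEMeasurable (fm i) μ := fun i => (hfmeas i).neg.max aemeasurable_const
  have hPmeas : AEMeasurable P μ := Finset.aemeasurable_fun_sum _ fun i _ => hfpmeas i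
  have hcmeas : ∀ i j, AEMeasurable (c i j) μ := fun i j =>
    ((hfpmeas i).mul (hfmmeas j)).div hPmeas
  have hcint : ∀ i j, Integrable (c i j) μ := by
    intro i j
    refine Integrable.mono (hint j).abs (hcmeas i j).aestronglyMeasurable ?_
    refine Filter.Eventually.of_forall fun ω => ?_
    rw [Real.norm_eq_abs, abs_of_nonneg (hc_nonneg i j ω), Real.norm_eq_abs, abs_abs]
    exact (hc_le i j ω).trans (hfm_le_abs j ω)
  have hhint : ∀ i j, Integrable (h i j) μ := fun i j => (hcint i j).sub (hcint j i)
  -- key pointwise identities (a.e.)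
  have hae2 : ∀ᵐ ω ∂μ, (∀ i, ∑ j, c i j ω = fp i ω) ∧ (∀ i, ∑ j, c j i ω = fm i ω) := by
    filter_upwards [hae] with ω hω
    have hsub : ∀ k, fp k ω - fm k ω = f k ω := by
      intro k
      simp only [hfp, hfm]
      rcases le_total (f k ω) 0 with hk | hk
      · rw [max_eq_right hk, max_eq_left (by linarith)]; ring
      · rw [max_eq_left hk, max_eq_right (by linarith)]; ring
    have hPm : ∑ k, fm k ω = P ω := by
      have : ∑ k, (fp k ω - fm k ω) = 0 := by
        simp only [hsub]; exact hω
      rw [Finset.sum_sub_distrib] at this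
      simp only [hP]; linarith
    by_cases hP0 : P ω = 0
    · have hfp0 : ∀ k, fp k ω = 0 := by
        intro k
        have h1 := hfp_le_P k ω
        have h2 := hfp_nonneg k ω
        linarith [hP0 ▸ h1]
      have hfm0 : ∀ k, fm k ω = 0 := by
        intro k
        have h1 : fm k ω ≤ ∑ k, fm k ω :=
          Finset.single_le_sum (fun k _ => hfm_nonneg k ω) (Finset.mem_univ k)
        have h2 := hfm_nonneg k ω
        rw [hPm, hP0] at h1
        linarith
      constructor
      · intro i
        rw [hfp0 i]
        refine Finset.sum_eq_zero fun j _ => ?_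
        simp [hc, hP0]
      · intro i
        rw [hfm0 i]
        refine Finset.sum_eq_zero fun j _ => ?_
        simp [hc, hP0]
    · constructor
      · intro i
        simp only [hc]
        rw [← Finset.sum_div, ← Finset.mul_sum, hPm, mul_div_assoc, div_self hP0, mul_one]
      · intro i
        simp only [hc]
        rw [← Finset.sum_div, ← Finset.sum_mul, mul_comm, mul_div_assoc, div_self hP0, mul_one]
  -- the L¹ elements
  set H : Fin n → Fin n → (Lp ℝ 1 μ) := fun i j => (hhint i j).toL1 (h i j) with hH
  have hHneg : ∀ i j, H j i = - H i j := by
    intro i j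
    apply Lp.ext
    filter_upwards [(hhint j i).coeFn_toL1, (hhint i j).coeFn_toL1,
      Lp.coeFn_neg (H i j)] with ω h1 h2 h3
    rw [h1, h3, Pi.neg_apply, h2]
    simp only [hh]
    ring
  have hHsum : ∀ i, ∑ j, H i j = g i := by
    intro i
    apply Lp.ext
    have hco := Lp_coeFn_finset_sum (Finset.univ : Finset (Fin n)) (H i)
    have hall : ∀ᵐ ω ∂μ, ∀ j, (H i j : α → ℝ) ω = h i j ω :=
      (ae_all_iff).2 fun j => (hhint i j).coeFn_toL1
    filter_upwards [hco, hall, hae2] with ω h1 h2 h3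
    rw [h1]
    calc ∑ j, (H i j : α → ℝ) ω = ∑ j, h i j ω := Finset.sum_congr rfl fun j _ => h2 j
      _ = ∑ j, c i j ω - ∑ j, c j i ω := by
          simp only [hh]; rw [Finset.sum_sub_distrib]
      _ = fp i ω - fm i ω := by rw [h3.1 i, h3.2 i]
      _ = f i ω := by
          simp only [hfp, hfm]
          rcases le_total (f i ω) 0 with hk | hk
          · rw [max_eq_right hk, max_eq_left (by linarith)]; ring
          · rw [max_eq_left hk, max_eq_right (by linarith)]; ring
  -- norm bound : ∑ j, ‖H i j‖ ≤ ‖ψ i‖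
  have hHnorm : ∀ i, ∑ j, ‖H i j‖ ≤ ‖ψ i‖ := by
    intro i
    have h1 : ∀ j, ‖H i j‖ ≤ ∫ ω, (c i j ω + c j i ω) ∂μ := by
      intro j
      rw [L1.norm_eq_integral_norm]
      have : (fun ω => ‖(H i j : α → ℝ) ω‖) =ᵐ[μ] fun ω => ‖h i j ω‖ := by
        filter_upwards [(hhint i j).coeFn_toL1] with ω hω
        rw [hω]
      rw [integral_congr_ae this]
      refine integral_mono (hhint i j).norm ((hcint i j).add (hcint j i)) fun ω => ?_
      rw [Real.norm_eq_abs]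
      simp only [hh]
      calc |c i j ω - c j i ω| ≤ |c i j ω| + |c j i ω| := abs_sub _ _
        _ = c i j ω + c j i ω := by
            rw [abs_of_nonneg (hc_nonneg i j ω), abs_of_nonneg (hc_nonneg j i ω)]
    calc ∑ j, ‖H i j‖ ≤ ∑ j, ∫ ω, (c i j ω + c j i ω) ∂μ :=
          Finset.sum_le_sum fun j _ => h1 j
      _ = ∫ ω, ∑ j, (c i j ω + c j i ω) ∂μ :=
          (integral_finset_sum _ fun j _ => (hcint i j).add (hcint j i)).symm
      _ ≤ ‖ψ i‖ := by
          have hnorm : ‖ψ i‖ = ‖g i‖ := (T.norm_map (ψ i)).symm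
          rw [hnorm, L1.norm_eq_integral_norm]
          refine integral_mono_ae (integrable_finset_sum _ fun j _ => (hcint i j).add (hcint j i))
            (hint i).norm ?_
          filter_upwards [hae2] with ω h3
          rw [Finset.sum_add_distrib, h3.1 i, h3.2 i, Real.norm_eq_abs]
          rcases le_total (f i ω) 0 with hk | hk
          · simp only [hfp, hfm]
            rw [max_eq_right hk, max_eq_left (by linarith), abs_of_nonpos hk]; ring_nf; rfl
          · simp only [hfp, hfm]
            rw [max_eq_left hk, max_eq_right (by linarith), abs_of_nonneg hk]; ring_nf; rfl
  -- final computation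
  set φ : Fin n → Fin n → StrongDual ℝ X := fun i j => T.symm (H i j) with hφ
  have hφnorm : ∀ i j, ‖φ i j‖ = ‖H i j‖ := fun i j => T.symm.norm_map (H i j)
  have hφneg : ∀ i j, φ j i = - φ i j := by
    intro i j
    rw [hφ]
    simp only
    rw [hHneg i j, map_neg]
  have hψeq : ∀ i, ψ i = ∑ j, φ i j := by
    intro i
    rw [hφ]
    simp only
    rw [← map_sum, hHsum i, hg]
    simp
  set S : ℝ := ∑ i, (ψ i) (x i) with hS
  have h2S : ∑ i, ∑ j, (φ i j) (x i - x j) = 2 * S := by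
    have hSa : S = ∑ i, ∑ j, (φ i j) (x i) := by
      rw [hS]
      refine Finset.sum_congr rfl fun i _ => ?_
      rw [hψeq i]
      simp [ContinuousLinearMap.sum_apply]
    calc ∑ i, ∑ j, (φ i j) (x i - x j)
        = ∑ i, ∑ j, ((φ i j) (x i) + (φ j i) (x j)) := by
          refine Finset.sum_congr rfl fun i _ => Finset.sum_congr rfl fun j _ => ?_
          rw [map_sub, hφneg i j]
          simp only [ContinuousLinearMap.neg_apply]
          ring
      _ = (∑ i, ∑ j, (φ i j) (x i)) + (∑ i, ∑ j, (φ j i) (x j)) := by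
          rw [← Finset.sum_add_distrib]
          exact Finset.sum_congr rfl fun i _ => Finset.sum_add_distrib
      _ = S + S := by
          rw [← hSa]
          congr 1
          rw [Finset.sum_comm]
          exact hSa.symm
      _ = 2 * S := by ring
  have hbound : ∑ i, ∑ j, (φ i j) (x i - x j) ≤ ∑ i, ∑ j, ‖H i j‖ * (r i + r j) := by
    refine Finset.sum_le_sum fun i _ => Finset.sum_le_sum fun j _ => ?_
    calc (φ i j) (x i - x j) ≤ ‖(φ i j) (x i - x j)‖ := le_abs_self _
      _ ≤ ‖φ i j‖ * ‖x i - x j‖ := ContinuousLinearMap.le_opNorm _ _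
      _ ≤ ‖H i j‖ * (r i + r j) := by
          rw [hφnorm]
          exact mul_le_mul_of_nonneg_left (hpair i j) (norm_nonneg _)
  have hHnormsymm : ∀ i j, ‖H j i‖ = ‖H i j‖ := by
    intro i j; rw [hHneg i j, norm_neg]
  have hsplit : ∑ i, ∑ j, ‖H i j‖ * (r i + r j) ≤ 2 * ∑ i, ‖ψ i‖ * r i := by
    have e1 : ∑ i, ∑ j, ‖H i j‖ * (r i + r j)
        = ∑ i, ∑ j, ‖H i j‖ * r i + ∑ i, ∑ j, ‖H i j‖ * r j := by
      rw [← Finset.sum_add_distrib]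
      refine Finset.sum_congr rfl fun i _ => ?_
      rw [← Finset.sum_add_distrib]
      refine Finset.sum_congr rfl fun j _ => ?_
      ring
    have e2 : ∑ i, ∑ j, ‖H i j‖ * r j = ∑ i, ∑ j, ‖H i j‖ * r i := by
      rw [Finset.sum_comm]
      refine Finset.sum_congr rfl fun i _ => Finset.sum_congr rfl fun j _ => ?_
      rw [hHnormsymm]
    have e3 : ∑ i, ∑ j, ‖H i j‖ * r i ≤ ∑ i, ‖ψ i‖ * r i := by
      refine Finset.sum_le_sum fun i _ => ?_
      rw [← Finset.sum_mul]
      exact mul_le_mul_of_nonneg_right (hHnorm i) (hr i)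
    rw [e1, e2]
    linarith
  have hfin := hbound.trans hsplit
  rw [h2S] at hfin
  linarith

open MeasureTheory


lemma norming_elt (ψ : X →L[ℝ] ℝ) {t : ℝ} (ht : 0 < t) :
    ∃ v : X, ‖v‖ ≤ 1 ∧ ‖ψ‖ - t ≤ ψ v := by
  by_contra hcon
  push_neg at hcon
  have hb : ∀ v : X, ‖v‖ ≤ 1 → ‖ψ v‖ ≤ ‖ψ‖ - t := by
    intro v hv
    have h1 := hcon v hv
    have h2 := hcon (-v) (by rwa [norm_neg])
    rw [map_neg] at h2
    rw [Real.norm_eq_abs, abs_le]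
    constructor <;> linarith
  have hnn : 0 ≤ ‖ψ‖ - t := le_trans (norm_nonneg _) (hb 0 (by simp))
  have : ‖ψ‖ ≤ ‖ψ‖ - t := by
    refine ContinuousLinearMap.opNorm_le_bound _ hnn fun v => ?_
    rcases eq_or_ne v 0 with rfl | hv0
    · simp
    · have hnv : 0 < ‖v‖ := norm_pos_iff.2 hv0
      have := hb (‖v‖⁻¹ • v) (by
        rw [norm_smul, norm_inv, norm_norm, inv_mul_cancel₀ hnv.ne'])
      have h5 : ψ (‖v‖⁻¹ • v) = ‖v‖⁻¹ * ψ v := by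
        rw [ContinuousLinearMap.map_smul, smul_eq_mul]
      rw [h5, Real.norm_eq_abs, abs_mul, abs_inv, abs_norm] at this
      rw [Real.norm_eq_abs]
      have h6 : |ψ v| = ‖v‖ * (‖v‖⁻¹ * |ψ v|) := by field_simp
      rw [h6]
      calc ‖v‖ * (‖v‖⁻¹ * |ψ v|) ≤ ‖v‖ * (‖ψ‖ - t) :=
            mul_le_mul_of_nonneg_left this (norm_nonneg v)
        _ = (‖ψ‖ - t) * ‖v‖ := mul_comm _ _
  linarith

lemma ball_lemma (T : StrongDual ℝ X ≃ₗᵢ[ℝ] Lp ℝ 1 μ)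
    {n : ℕ} (x : Fin n → X) (r : Fin n → ℝ) (hr : ∀ i, 0 < r i)
    (hpair : ∀ i j, ‖x i - x j‖ ≤ r i + r j) (ε : ℝ) (hε : 0 < ε) :
    ∃ z : X, ∀ i, ‖z - x i‖ ≤ r i + ε := by
  classical
  by_contra hcon
  push_neg at hcon
  set O : Set (Fin n → X) := ⋂ i, (fun w : Fin n → X => w i) ⁻¹' (Metric.ball 0 (r i + ε))
    with hOdef
  have hmemO : ∀ w : Fin n → X, w ∈ O ↔ ∀ i, ‖w i‖ < r i + ε := by
    intro w
    simp [hOdef, Metric.mem_ball, dist_zero_right]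
  set A : Set (Fin n → X) := Set.range (fun z : X => fun i => z - x i) with hAdef
  have hOopen : IsOpen O :=
    isOpen_iInter_of_finite fun i => (Metric.isOpen_ball).preimage (continuous_apply i)
  have hOconv : Convex ℝ O :=
    convex_iInter fun i => (convex_ball (0:X) (r i + ε)).linear_preimage (LinearMap.proj (R := ℝ) (φ := fun _ : Fin n => X) i)
  have hAconv : Convex ℝ A := by
    rintro _ ⟨z, rfl⟩ _ ⟨z', rfl⟩ a b ha hb hab
    refine ⟨a • z + b • z', ?_⟩
    funext i
    have hx : a • x i + b • x i = x i := by rw [← add_smul, hab, one_smul]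
    simp only [Pi.add_apply, Pi.smul_apply, smul_sub]
    conv_lhs => rw [← hx]
    abel
  have hdisj : Disjoint O A := by
    rw [Set.disjoint_right]
    rintro _ ⟨z, rfl⟩ hmem
    rw [hmemO] at hmem
    obtain ⟨i, hi⟩ := hcon z
    exact absurd (hmem i) (not_lt.2 hi.le)
  obtain ⟨Φ, u, hO, hA⟩ := geometric_hahn_banach_open hOconv hOopen hAconv hdisj
  have h0O : (0 : Fin n → X) ∈ O := by
    rw [hmemO]
    intro i
    simpa using add_pos (hr i) hε
  have hupos : 0 < u := by
    have := hO 0 h0O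
    simpa using this
  have hcont : ∀ i : Fin n, Continuous fun v : X => (Pi.single i v : Fin n → X) :=
    fun i => continuous_single (A := fun _ : Fin n => X) i
  set sing : (i : Fin n) → (X →L[ℝ] (Fin n → X)) := fun i =>
    ⟨LinearMap.single ℝ (fun _ => X) i, hcont i⟩ with hsing
  have hsing_apply : ∀ i (v : X), sing i v = Pi.single i v := fun i v => rfl
  set Ψ : Fin n → StrongDual ℝ X := fun i => -(Φ.comp (sing i)) with hΨ
  have hΨ_apply : ∀ i (v : X), Ψ i v = -((Φ.comp (sing i)) v) := by
    intro i v
    simp [hΨ]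
  have hdecomp : ∀ w : Fin n → X, Φ w = ∑ i, (Φ.comp (sing i)) (w i) := by
    intro w
    conv_lhs => rw [← Finset.univ_sum_single w]
    rw [map_sum]
    refine Finset.sum_congr rfl fun i _ => ?_
    rw [ContinuousLinearMap.comp_apply, hsing_apply]
  -- A-side : for all z, u ≤ Φ (fun i => z - x i)
  have hAside : ∀ z : X, u ≤ Φ (fun i => z - x i) :=
    fun z => hA _ ⟨z, rfl⟩
  -- constants vanish
  have hconst : ∀ z : X, Φ (fun _ => z) = 0 := by
    intro z
    by_contra hz
    have key : ∀ c : ℝ, u ≤ c * Φ (fun _ => z) + Φ (fun i => (0:X) - x i) := by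
      intro c
      have h1 := hAside (c • z)
      have h2 : (fun i => c • z - x i) = (fun _ => c • z) + (fun i => (0:X) - x i) := by
        funext i
        simp [sub_eq_add_neg]
      rw [h2, map_add] at h1
      have h3 : (fun _ : Fin n => c • z) = c • (fun _ : Fin n => z) := rfl
      rw [h3, ContinuousLinearMap.map_smul, smul_eq_mul] at h1
      exact h1
    have := key ((u - 1 - Φ (fun i => (0:X) - x i)) / Φ (fun _ => z))
    rw [div_mul_cancel₀ _ hz] at this
    linarith
  have hΨsum : ∑ i, Ψ i = 0 := by
    ext z
    simp only [ContinuousLinearMap.sum_apply, ContinuousLinearMap.zero_apply]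
    have h1 : ∑ i, Ψ i z = -(Φ (fun _ : Fin n => z)) := by
      rw [hdecomp (fun _ => z)]
      rw [← Finset.sum_neg_distrib]
      exact Finset.sum_congr rfl fun i _ => hΨ_apply i z
    rw [h1, hconst, neg_zero]
  have hAx : u ≤ ∑ i, Ψ i (x i) := by
    have h1 := hAside 0
    have h2 : Φ (fun i => (0:X) - x i) = ∑ i, Ψ i (x i) := by
      rw [hdecomp]
      refine Finset.sum_congr rfl fun i _ => ?_
      rw [hΨ_apply i (x i), map_sub, map_zero]
      ring
    rw [h2] at h1
    exact h1
  have hflow := flow_bound T Ψ hΨsum x r (fun i => (hr i).le) hpair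
  set M : ℝ := ∑ i, ‖Ψ i‖ with hM
  have hM_nonneg : 0 ≤ M := Finset.sum_nonneg fun i _ => norm_nonneg _
  rcases eq_or_lt_of_le hM_nonneg with hM0 | hMpos
  · have hzero : ∀ i, Ψ i = 0 := by
      intro i
      have := (Finset.sum_eq_zero_iff_of_nonneg (fun i _ => norm_nonneg (Ψ i))).1 hM0.symm
      exact norm_eq_zero.1 (this i (Finset.mem_univ i))
    have : ∑ i, Ψ i (x i) = 0 := Finset.sum_eq_zero fun i _ => by rw [hzero i]; rfl
    rw [this] at hAx
    linarith
  · obtain ⟨i₀, hi₀⟩ : ∃ i, ‖Ψ i‖ ≠ 0 := by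
      by_contra hall
      push_neg at hall
      have : M = 0 := Finset.sum_eq_zero fun i _ => hall i
      linarith
    set R : ℝ := ∑ i, (r i + ε) with hR
    have hRpos : 0 < R :=
      Finset.sum_pos (fun i _ => add_pos (hr i) hε) ⟨i₀, Finset.mem_univ i₀⟩
    set t : ℝ := ε * M / (2 * R) with ht
    have htpos : 0 < t := by
      apply div_pos (mul_pos hε hMpos)
      linarith
    have htR : t * R = ε * M / 2 := by
      have hRne : R ≠ 0 := ne_of_gt hRpos
      rw [ht, div_mul_eq_mul_div, mul_comm (2:ℝ) R, ← div_div, mul_div_assoc,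
        div_self hRne, mul_one]
    set s : ℝ := (ε * M / 2) / (u + ε * M) with hs
    have hdenpos : 0 < u + ε * M := add_pos hupos (mul_pos hε hMpos)
    have hspos : 0 < s := div_pos (half_pos (mul_pos hε hMpos)) hdenpos
    have hs1 : s < 1 := by
      rw [hs, div_lt_one hdenpos]
      linarith [mul_pos hε hMpos]
    have hs1' : (0:ℝ) ≤ 1 - s := by linarith
    have hεM2 : (0:ℝ) < ε * M / 2 := half_pos (mul_pos hε hMpos)
    choose v hv1 hv2 using fun i => norming_elt (Ψ i) htpos
    set w : Fin n → X := fun i => (-((1 - s) * (r i + ε))) • v i with hw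
    have hwO : w ∈ O := by
      rw [hmemO]
      intro i
      have hre : (0:ℝ) < r i + ε := add_pos (hr i) hε
      have hnn : (0:ℝ) ≤ (1 - s) * (r i + ε) := mul_nonneg hs1' hre.le
      have h1 : ‖w i‖ = (1 - s) * (r i + ε) * ‖v i‖ := by
        simp only [hw]
        rw [norm_smul, Real.norm_eq_abs, abs_neg, abs_of_nonneg hnn]
      rw [h1]
      have h2 : (1 - s) * (r i + ε) * ‖v i‖ ≤ (1 - s) * (r i + ε) :=
        mul_le_of_le_one_right hnn (hv1 i)
      have h3 : (1 - s) * (r i + ε) < r i + ε := by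
        have := mul_lt_mul_of_pos_right (show (1:ℝ) - s < 1 by linarith) hre
        simpa using this
      linarith
    have hΦw : Φ w = (1 - s) * ∑ i, ((r i + ε) * Ψ i (v i)) := by
      rw [hdecomp w]
      rw [Finset.mul_sum]
      refine Finset.sum_congr rfl fun i _ => ?_
      have h1 : (Φ.comp (sing i)) (w i) = -(Ψ i (w i)) := by
        rw [hΨ_apply]; ring
      rw [h1, hw]
      simp only [ContinuousLinearMap.map_smul, smul_eq_mul]
      ring
    have hsum1 : ∑ i, ((r i + ε) * Ψ i (v i)) ≥ u + ε * M / 2 := by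
      have h1 : ∀ i, (r i + ε) * (‖Ψ i‖ - t) ≤ (r i + ε) * Ψ i (v i) := fun i =>
        mul_le_mul_of_nonneg_left (hv2 i) (by linarith [hr i])
      have h2 : ∑ i, ((r i + ε) * (‖Ψ i‖ - t)) ≤ ∑ i, ((r i + ε) * Ψ i (v i)) :=
        Finset.sum_le_sum fun i _ => h1 i
      have h3 : ∑ i, ((r i + ε) * (‖Ψ i‖ - t)) = ∑ i, (r i * ‖Ψ i‖) + ε * M - t * R := by
        rw [hM, hR, Finset.mul_sum, Finset.mul_sum, ← Finset.sum_add_distrib,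
          ← Finset.sum_sub_distrib]
        exact Finset.sum_congr rfl fun i _ => by ring
      have h4 : u ≤ ∑ i, (r i * ‖Ψ i‖) := by
        have : ∑ i, ‖Ψ i‖ * r i = ∑ i, r i * ‖Ψ i‖ :=
          Finset.sum_congr rfl fun i _ => mul_comm _ _
        linarith [hAx.trans hflow]
      rw [htR] at h3
      linarith [h2, h3 ▸ h2]
    have hlow : u ≤ Φ w := by
      rw [hΦw]
      have hfactor : (1 - s) * (u + ε * M / 2) ≥ u := by
        have hkey : s * (u + ε * M / 2) ≤ ε * M / 2 := by
          rw [hs, div_mul_eq_mul_div, div_le_iff₀ hdenpos]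
          have h7 : u + ε * M / 2 ≤ u + ε * M := by linarith
          exact mul_le_mul_of_nonneg_left h7 hεM2.le
        have h9 : (1 - s) * (u + ε * M / 2) = (u + ε * M / 2) - s * (u + ε * M / 2) := by
          ring
        linarith
      have h5 : (1 - s) * ∑ i, ((r i + ε) * Ψ i (v i)) ≥ (1 - s) * (u + ε * M / 2) :=
        mul_le_mul_of_nonneg_left hsum1 (by linarith)
      linarith
    exact absurd (hO w hwO) (not_lt.2 hlow)

open MeasureTheory


lemma norm_one_of_extreme [Nontrivial X] (e : X)
    (he : e ∈ Set.extremePoints ℝ (Metric.closedBall (0 : X) 1)) : ‖e‖ = 1 := by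
  have hle : ‖e‖ ≤ 1 := by
    have := he.1
    rwa [Metric.mem_closedBall, dist_zero_right] at this
  by_contra hne
  have hlt : ‖e‖ < 1 := lt_of_le_of_ne hle hne
  obtain ⟨v, hv⟩ := exists_ne (0 : X)
  have hvn : 0 < ‖v‖ := norm_pos_iff.2 hv
  set u : X := ‖v‖⁻¹ • v with hu
  have hu1 : ‖u‖ = 1 := by
    rw [hu, norm_smul, norm_inv, norm_norm, inv_mul_cancel₀ hvn.ne']
  set δ : ℝ := 1 - ‖e‖ with hδ
  have hδpos : 0 < δ := by simp only [hδ]; linarith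
  have hmema : e - δ • u ∈ Metric.closedBall (0 : X) 1 := by
    rw [Metric.mem_closedBall, dist_zero_right]
    calc ‖e - δ • u‖ ≤ ‖e‖ + ‖δ • u‖ := norm_sub_le _ _
      _ = ‖e‖ + δ := by
          rw [norm_smul, Real.norm_eq_abs, abs_of_pos hδpos, hu1, mul_one]
      _ = 1 := by simp [hδ]
  have hmemb : e + δ • u ∈ Metric.closedBall (0 : X) 1 := by
    rw [Metric.mem_closedBall, dist_zero_right]
    calc ‖e + δ • u‖ ≤ ‖e‖ + ‖δ • u‖ := norm_add_le _ _
      _ = ‖e‖ + δ := by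
          rw [norm_smul, Real.norm_eq_abs, abs_of_pos hδpos, hu1, mul_one]
      _ = 1 := by simp [hδ]
  have hmid : e ∈ openSegment ℝ (e - δ • u) (e + δ • u) := by
    refine ⟨1/2, 1/2, by norm_num, by norm_num, by norm_num, ?_⟩
    have h2 : (1/2 : ℝ) • e + (1/2 : ℝ) • e = e := by
      rw [← add_smul]; norm_num
    rw [smul_sub, smul_add]
    calc (1/2:ℝ) • e - (1/2:ℝ) • (δ • u) + ((1/2:ℝ) • e + (1/2:ℝ) • (δ • u))
        = (1/2:ℝ) • e + (1/2:ℝ) • e := by abel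
      _ = e := h2
  have heq := he.2 hmema hmemb hmid
  have hz : δ • u = 0 := sub_eq_self.1 heq
  rw [smul_eq_zero] at hz
  rcases hz with h | h
  · exact hδpos.ne' h
  · rw [h, norm_zero] at hu1; norm_num at hu1

lemma key_contradiction [CompleteSpace X] [Nontrivial X]
    (T : StrongDual ℝ X ≃ₗᵢ[ℝ] Lp ℝ 1 μ)
    (e y : X) (he1 : ‖e‖ = 1) (hy1 : ‖y‖ = 1)
    (he : e ∈ Set.extremePoints ℝ (Metric.closedBall (0 : X) 1))
    {η : ℝ} (hη : 0 < η) (hη2 : η < 1/2)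
    (hA : ‖e - y‖ ≤ 2 - 2*η) (hB : ‖e + y‖ ≤ 2 - 2*η) : False := by
  classical
  have hhalfe : (1/2 : ℝ) • e + (1/2 : ℝ) • e = e := by
    rw [← add_smul]; norm_num
  have hEE : ‖e + e‖ ≤ 2 := by
    calc ‖e + e‖ ≤ ‖e‖ + ‖e‖ := norm_add_le _ _
      _ = 2 := by rw [he1]; norm_num
  have key1 : ‖e - (1/2 : ℝ) • y‖ ≤ 3/2 - η := by
    have hsplit : e - (1/2 : ℝ) • y = (1/2 : ℝ) • (e - y) + (1/2 : ℝ) • e := by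
      rw [smul_sub]
      conv_lhs => rw [← hhalfe]
      abel
    rw [hsplit]
    calc ‖(1/2 : ℝ) • (e - y) + (1/2 : ℝ) • e‖
        ≤ ‖(1/2 : ℝ) • (e - y)‖ + ‖(1/2 : ℝ) • e‖ := norm_add_le _ _
      _ = (1/2) * ‖e - y‖ + (1/2) * ‖e‖ := by
          rw [norm_smul, norm_smul, Real.norm_eq_abs,
            abs_of_pos (by norm_num : (0:ℝ) < 1/2)]
      _ ≤ (1/2) * (2 - 2*η) + (1/2) * 1 := by
          rw [he1]
          have := mul_le_mul_of_nonneg_left hA (by norm_num : (0:ℝ) ≤ 1/2)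
          linarith
      _ = 3/2 - η := by ring
  have key2 : ‖e + (1/2 : ℝ) • y‖ ≤ 3/2 - η := by
    have hsplit : e + (1/2 : ℝ) • y = (1/2 : ℝ) • (e + y) + (1/2 : ℝ) • e := by
      rw [smul_add]
      conv_lhs => rw [← hhalfe]
      abel
    rw [hsplit]
    calc ‖(1/2 : ℝ) • (e + y) + (1/2 : ℝ) • e‖
        ≤ ‖(1/2 : ℝ) • (e + y)‖ + ‖(1/2 : ℝ) • e‖ := norm_add_le _ _
      _ = (1/2) * ‖e + y‖ + (1/2) * ‖e‖ := by
          rw [norm_smul, norm_smul, Real.norm_eq_abs,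
            abs_of_pos (by norm_num : (0:ℝ) < 1/2)]
      _ ≤ (1/2) * (2 - 2*η) + (1/2) * 1 := by
          rw [he1]
          have := mul_le_mul_of_nonneg_left hB (by norm_num : (0:ℝ) ≤ 1/2)
          linarith
      _ = 3/2 - η := by ring
  set β : ℕ → ℝ := fun k => η / 2 * (1/2)^k with hβ
  have hβpos : ∀ k, 0 < β k := fun k => by
    apply mul_pos (by linarith)
    positivity
  have hβmono : ∀ k, β (k+1) ≤ β k := by
    intro k
    rw [hβ]
    simp only
    rw [pow_succ]
    have hp : (0:ℝ) < (1/2)^k := by positivity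
    nlinarith
  -- step
  have hstep : ∀ (k : ℕ) (z : X),
      (‖z - e‖ ≤ 1 + β k ∧ ‖z + e‖ ≤ 1 + β k ∧ ‖z - (1/2 : ℝ) • y‖ ≤ 1/2 - η + β k) →
      ∃ z' : X,
        (‖z' - e‖ ≤ 1 + β (k+1) ∧ ‖z' + e‖ ≤ 1 + β (k+1) ∧
          ‖z' - (1/2 : ℝ) • y‖ ≤ 1/2 - η + β (k+1)) ∧ ‖z' - z‖ ≤ β k + β (k+1) := by
    intro k z hz
    obtain ⟨hz1, hz2, hz3⟩ := hz
    obtain ⟨z', hz'⟩ := ball_lemma T ![e, -e, (1/2 : ℝ) • y, z] ![1, 1, 1/2 - η, β k]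
      (by
        intro i
        fin_cases i
        · show (0:ℝ) < 1; norm_num
        · show (0:ℝ) < 1; norm_num
        · show (0:ℝ) < 1/2 - η; linarith
        · show (0:ℝ) < β k; exact hβpos k)
      (by
        intro i j
        fin_cases i <;> fin_cases j
        · show ‖e - e‖ ≤ 1 + 1; simp
        · show ‖e - -e‖ ≤ 1 + 1; rw [sub_neg_eq_add]; linarith
        · show ‖e - (1/2 : ℝ) • y‖ ≤ 1 + (1/2 - η); linarith
        · show ‖e - z‖ ≤ 1 + β k
          rw [norm_sub_rev]; exact hz1
        · show ‖-e - e‖ ≤ 1 + 1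
          have : -e - e = -(e + e) := by abel
          rw [this, norm_neg]; linarith
        · show ‖-e - -e‖ ≤ 1 + 1; simp
        · show ‖-e - (1/2 : ℝ) • y‖ ≤ 1 + (1/2 - η)
          have : -e - (1/2 : ℝ) • y = -(e + (1/2 : ℝ) • y) := by abel
          rw [this, norm_neg]; linarith
        · show ‖-e - z‖ ≤ 1 + β k
          have : -e - z = -(z + e) := by abel
          rw [this, norm_neg]; exact hz2
        · show ‖(1/2 : ℝ) • y - e‖ ≤ 1/2 - η + 1
          rw [norm_sub_rev]; linarith
        · show ‖(1/2 : ℝ) • y - -e‖ ≤ 1/2 - η + 1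
          have : (1/2 : ℝ) • y - -e = e + (1/2 : ℝ) • y := by abel
          rw [this]; linarith
        · show ‖(1/2 : ℝ) • y - (1/2 : ℝ) • y‖ ≤ (1/2 - η) + (1/2 - η); simp; linarith
        · show ‖(1/2 : ℝ) • y - z‖ ≤ 1/2 - η + β k
          rw [norm_sub_rev]; exact hz3
        · show ‖z - e‖ ≤ β k + 1; linarith
        · show ‖z - -e‖ ≤ β k + 1
          rw [sub_neg_eq_add]; linarith
        · show ‖z - (1/2 : ℝ) • y‖ ≤ β k + (1/2 - η); linarith
        · show ‖z - z‖ ≤ β k + β k; simp; linarith [hβpos k])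
      (β (k+1)) (hβpos (k+1))
    refine ⟨z', ⟨?_, ?_, ?_⟩, ?_⟩
    · have := hz' 0
      show ‖z' - e‖ ≤ 1 + β (k+1)
      exact this
    · have := hz' 1
      have h2 : ‖z' - -e‖ ≤ 1 + β (k+1) := this
      rwa [sub_neg_eq_add] at h2
    · have := hz' 2
      exact this
    · have := hz' 3
      have h3 : ‖z' - z‖ ≤ β k + β (k+1) := this
      exact h3
  -- base
  have hbase : ∃ z : X,
      ‖z - e‖ ≤ 1 + β 0 ∧ ‖z + e‖ ≤ 1 + β 0 ∧ ‖z - (1/2 : ℝ) • y‖ ≤ 1/2 - η + β 0 := by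
    obtain ⟨z, hz⟩ := ball_lemma T ![e, -e, (1/2 : ℝ) • y] ![1, 1, 1/2 - η]
      (by
        intro i
        fin_cases i
        · show (0:ℝ) < 1; norm_num
        · show (0:ℝ) < 1; norm_num
        · show (0:ℝ) < 1/2 - η; linarith)
      (by
        intro i j
        fin_cases i <;> fin_cases j
        · show ‖e - e‖ ≤ 1 + 1; simp
        · show ‖e - -e‖ ≤ 1 + 1; rw [sub_neg_eq_add]; linarith
        · show ‖e - (1/2 : ℝ) • y‖ ≤ 1 + (1/2 - η); linarith
        · show ‖-e - e‖ ≤ 1 + 1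
          have : -e - e = -(e + e) := by abel
          rw [this, norm_neg]; linarith
        · show ‖-e - -e‖ ≤ 1 + 1; simp
        · show ‖-e - (1/2 : ℝ) • y‖ ≤ 1 + (1/2 - η)
          have : -e - (1/2 : ℝ) • y = -(e + (1/2 : ℝ) • y) := by abel
          rw [this, norm_neg]; linarith
        · show ‖(1/2 : ℝ) • y - e‖ ≤ 1/2 - η + 1
          rw [norm_sub_rev]; linarith
        · show ‖(1/2 : ℝ) • y - -e‖ ≤ 1/2 - η + 1
          have : (1/2 : ℝ) • y - -e = e + (1/2 : ℝ) • y := by abel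
          rw [this]; linarith
        · show ‖(1/2 : ℝ) • y - (1/2 : ℝ) • y‖ ≤ (1/2 - η) + (1/2 - η); simp; linarith)
      (β 0) (hβpos 0)
    refine ⟨z, ?_, ?_, ?_⟩
    · exact hz 0
    · have h2 : ‖z - -e‖ ≤ 1 + β 0 := hz 1
      rwa [sub_neg_eq_add] at h2
    · exact hz 2
  -- build the sequence
  obtain ⟨z0, hz0⟩ := hbase
  choose F hF1 hF2 using hstep
  let Gd : ℕ → X → Prop := fun k z =>
    ‖z - e‖ ≤ 1 + β k ∧ ‖z + e‖ ≤ 1 + β k ∧ ‖z - (1/2 : ℝ) • y‖ ≤ 1/2 - η + β k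
  let seq : (k : ℕ) → {z : X // Gd k z} :=
    fun k => Nat.rec (⟨z0, hz0⟩ : {z : X // Gd 0 z})
      (fun k ih => ⟨F k ih.1 ih.2, hF1 k ih.1 ih.2⟩) k
  have hGd : ∀ k, Gd k (seq k).1 := fun k => (seq k).2
  have hd : ∀ k, ‖(seq (k+1)).1 - (seq k).1‖ ≤ β k + β (k+1) :=
    fun k => hF2 k (seq k).1 (seq k).2
  have hcauchy : CauchySeq (fun k => (seq k).1) := by
    refine cauchySeq_of_le_geometric (1/2) η (by norm_num) fun k => ?_
    rw [dist_eq_norm, norm_sub_rev]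
    calc ‖(seq (k+1)).1 - (seq k).1‖ ≤ β k + β (k+1) := hd k
      _ ≤ β k + β k := by linarith [hβmono k]
      _ = η * (1/2)^k := by rw [hβ]; ring
  obtain ⟨zl, hzl⟩ := cauchySeq_tendsto_of_complete hcauchy
  have hβ0 : Filter.Tendsto β Filter.atTop (nhds 0) := by
    have h1 : Filter.Tendsto (fun k : ℕ => (1/2 : ℝ)^k) Filter.atTop (nhds 0) :=
      tendsto_pow_atTop_nhds_zero_of_lt_one (by norm_num) (by norm_num)
    have h2 := h1.const_mul (η/2)
    rw [mul_zero] at h2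
    exact h2
  have hle1 : ‖zl - e‖ ≤ 1 := by
    have t1 : Filter.Tendsto (fun k => ‖(seq k).1 - e‖) Filter.atTop (nhds ‖zl - e‖) :=
      (hzl.sub_const e).norm
    have t2 : Filter.Tendsto (fun k => 1 + β k) Filter.atTop (nhds 1) := by
      have h8 := (tendsto_const_nhds :
        Filter.Tendsto (fun _ : ℕ => (1:ℝ)) Filter.atTop (nhds 1)).add hβ0
      simpa using h8
    exact le_of_tendsto_of_tendsto' t1 t2 fun k => (hGd k).1
  have hle2 : ‖zl + e‖ ≤ 1 := by
    have t1 : Filter.Tendsto (fun k => ‖(seq k).1 + e‖) Filter.atTop (nhds ‖zl + e‖) :=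
      (hzl.add_const e).norm
    have t2 : Filter.Tendsto (fun k => 1 + β k) Filter.atTop (nhds 1) := by
      have h8 := (tendsto_const_nhds :
        Filter.Tendsto (fun _ : ℕ => (1:ℝ)) Filter.atTop (nhds 1)).add hβ0
      simpa using h8
    exact le_of_tendsto_of_tendsto' t1 t2 fun k => (hGd k).2.1
  have hle3 : ‖zl - (1/2 : ℝ) • y‖ ≤ 1/2 - η := by
    have t1 : Filter.Tendsto (fun k => ‖(seq k).1 - (1/2 : ℝ) • y‖) Filter.atTop
        (nhds ‖zl - (1/2 : ℝ) • y‖) := (hzl.sub_const _).norm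
    have t2 : Filter.Tendsto (fun k => 1/2 - η + β k) Filter.atTop (nhds (1/2 - η)) := by
      have h8 := (tendsto_const_nhds :
        Filter.Tendsto (fun _ : ℕ => (1/2 - η : ℝ)) Filter.atTop (nhds (1/2 - η))).add hβ0
      simpa using h8
    exact le_of_tendsto_of_tendsto' t1 t2 fun k => (hGd k).2.2
  have hynorm : ‖(1/2 : ℝ) • y‖ = 1/2 := by
    rw [norm_smul, hy1, Real.norm_eq_abs]
    norm_num
  have hzlpos : 0 < ‖zl‖ := by
    have h6 : ‖zl - (zl - (1/2 : ℝ) • y)‖ ≤ ‖zl‖ + ‖zl - (1/2 : ℝ) • y‖ :=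
      norm_sub_le _ _
    have h7 : zl - (zl - (1/2 : ℝ) • y) = (1/2 : ℝ) • y := by abel
    rw [h7, hynorm] at h6
    linarith
  have hzlne : zl ≠ 0 := norm_pos_iff.1 hzlpos
  have hmema : e - zl ∈ Metric.closedBall (0 : X) 1 := by
    rw [Metric.mem_closedBall, dist_zero_right, norm_sub_rev]
    exact hle1
  have hmemb : e + zl ∈ Metric.closedBall (0 : X) 1 := by
    rw [Metric.mem_closedBall, dist_zero_right, add_comm]
    exact hle2
  have hmid : e ∈ openSegment ℝ (e - zl) (e + zl) := by
    refine ⟨1/2, 1/2, by norm_num, by norm_num, by norm_num, ?_⟩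
    rw [smul_sub, smul_add]
    calc (1/2:ℝ) • e - (1/2:ℝ) • zl + ((1/2:ℝ) • e + (1/2:ℝ) • zl)
        = (1/2:ℝ) • e + (1/2:ℝ) • e := by abel
      _ = e := hhalfe
  have heq := he.2 hmema hmemb hmid
  exact hzlne (sub_eq_self.1 heq)

end Aux

/-- A nonzero Lindenstrauss space whose closed unit ball has an extreme point has
thinness index `2`. -/
theorem thinness_eq_two_of_lindenstrauss_extremePoint
    (X : Type*) [NormedAddCommGroup X] [NormedSpace ℝ X] [CompleteSpace X] [Nontrivial X]
    (hL : IsLindenstrauss X)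
    (hext : (Set.extremePoints ℝ (Metric.closedBall (0 : X) 1)).Nonempty) :
    thinness X = 2 := by
  classical
  obtain ⟨α, mα, μ, ⟨T⟩⟩ := hL
  obtain ⟨e, he⟩ := hext
  have he1 : ‖e‖ = 1 := norm_one_of_extreme e he
  have h2mem : (2:ℝ) ∈ {r : ℝ | 0 < r ∧ ∀ (n : ℕ) (x : Fin n → X), (∀ i, ‖x i‖ = 1) →
      ∀ ε : ℝ, 0 < ε → ∃ y : X, ‖y‖ = 1 ∧ ∀ i, ‖x i - y‖ < r + ε} := by
    refine ⟨by norm_num, fun n x hx ε hε => ⟨e, he1, fun i => ?_⟩⟩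
    calc ‖x i - e‖ ≤ ‖x i‖ + ‖e‖ := norm_sub_le _ _
      _ = 2 := by rw [hx i, he1]; norm_num
      _ < 2 + ε := by linarith
  have hlb : ∀ r ∈ {r : ℝ | 0 < r ∧ ∀ (n : ℕ) (x : Fin n → X), (∀ i, ‖x i‖ = 1) →
      ∀ ε : ℝ, 0 < ε → ∃ y : X, ‖y‖ = 1 ∧ ∀ i, ‖x i - y‖ < r + ε}, (2:ℝ) ≤ r := by
    rintro r ⟨hr0, hrP⟩
    by_contra hlt
    push_neg at hlt
    set ε : ℝ := (2 - r)/2 with hε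
    have hεpos : 0 < ε := by rw [hε]; linarith
    obtain ⟨y, hy1, hy2⟩ := hrP 2 ![e, -e]
      (by
        intro i
        fin_cases i
        · show ‖e‖ = 1; exact he1
        · show ‖-e‖ = 1; rw [norm_neg]; exact he1)
      ε hεpos
    have hAx : ‖e - y‖ < r + ε := hy2 0
    have hB0 : ‖-e - y‖ < r + ε := hy2 1
    have hBx : ‖e + y‖ < r + ε := by
      have h9 : -e - y = -(e + y) := by abel
      rw [h9, norm_neg] at hB0
      exact hB0
    have hre : r + ε < 2 := by rw [hε]; linarith
    set η : ℝ := min ((2 - (r + ε))/2) (1/4) with hη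
    have hηpos : 0 < η := lt_min (by linarith) (by norm_num)
    have hηhalf : η < 1/2 := lt_of_le_of_lt (min_le_right _ _) (by norm_num)
    have hrε : r + ε ≤ 2 - 2*η := by
      have h10 : η ≤ (2 - (r + ε))/2 := min_le_left _ _
      linarith
    exact key_contradiction T e y he1 hy1 he hηpos hηhalf (by linarith) (by linarith)
  unfold thinness
  exact le_antisymm (csInf_le ⟨2, fun b hb => hlb b hb⟩ h2mem) (le_csInf ⟨2, h2mem⟩ hlb)
end

section
/- Let X be a nonzero real Banach space which is a Lindenstrauss space and which is an ai-ideal in every superspace, i.e., for every real Banach space Z and every isometric linear embedding of X into Z, the image of X is an ai-ideal in Z (by a theorem of Abrahamsen–Lima–Nygaard this property characterizes the Gurariĭ spaces). Then the closed unit ball B_X has no extreme points. -/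
open Filter Topology


section ExtConstruction

variable {X : Type} [NormedAddCommGroup X] [NormedSpace ℝ X]

/-- Hypotheses bundle for the auxiliary renorming of `X × ℝ`. -/
def ExtProp (x y : X) (ε : ℝ) : Prop :=
  0 < ε ∧ ε ≤ 1 ∧ ‖x‖ ≤ 1 ∧ ‖x + y‖ ≤ 1 + ε ∧ ‖x - y‖ ≤ 1 + ε

/-- The function whose infimum over `p` defines the norm. -/
noncomputable def extF (x y : X) (ε : ℝ) (v : X × ℝ) (p : ℝ × ℝ) : ℝ :=
  ‖v.1 - p.1 • x - p.2 • y‖ + max |p.1| |p.2| + ε * |v.2 - p.2|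

open scoped Classical in
/-- The auxiliary norm on `X × ℝ`. -/
noncomputable def extN (x y : X) (ε : ℝ) (v : X × ℝ) : ℝ :=
  if ExtProp x y ε then ⨅ p : ℝ × ℝ, extF x y ε v p else ‖v.1‖ + |v.2|

variable {x y : X} {ε : ℝ}

lemma extF_nonneg (h : 0 < ε) (v : X × ℝ) (p : ℝ × ℝ) : 0 ≤ extF x y ε v p := by
  unfold extF
  have h1 : (0:ℝ) ≤ ‖v.1 - p.1 • x - p.2 • y‖ := norm_nonneg _
  have h2 : (0:ℝ) ≤ max |p.1| |p.2| := le_max_of_le_left (abs_nonneg _)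
  have h3 : (0:ℝ) ≤ ε * |v.2 - p.2| := mul_nonneg h.le (abs_nonneg _)
  linarith

lemma extF_bdd (h : 0 < ε) (v : X × ℝ) : BddBelow (Set.range (extF x y ε v)) :=
  ⟨0, by rintro a ⟨p, rfl⟩; exact extF_nonneg h v p⟩

lemma extN_eq (h : ExtProp x y ε) (v : X × ℝ) :
    extN x y ε v = ⨅ p : ℝ × ℝ, extF x y ε v p := by
  simp [extN, h]

lemma extN_le_F (h : ExtProp x y ε) (v : X × ℝ) (p : ℝ × ℝ) :
    extN x y ε v ≤ extF x y ε v p := by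
  rw [extN_eq h]
  exact ciInf_le (extF_bdd h.1 v) p

lemma le_extN (h : ExtProp x y ε) (v : X × ℝ) {a : ℝ}
    (ha : ∀ p : ℝ × ℝ, a ≤ extF x y ε v p) : a ≤ extN x y ε v := by
  rw [extN_eq h]
  exact le_ciInf ha

lemma ext_norm_y (h : ExtProp x y ε) : ‖y‖ ≤ 1 + ε := by
  obtain ⟨hε, hε1, hx, h1, h2⟩ := h
  have : (2:ℝ) * ‖y‖ ≤ 2 * (1 + ε) := by
    have : (2:ℝ) • y = (x + y) - (x - y) := by module
    calc (2:ℝ) * ‖y‖ = ‖(2:ℝ) • y‖ := by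
          rw [norm_smul]; simp
      _ = ‖(x + y) - (x - y)‖ := by rw [this]
      _ ≤ ‖x + y‖ + ‖x - y‖ := norm_sub_le _ _
      _ ≤ 2 * (1 + ε) := by linarith
  linarith

/-- The key inequality. -/
lemma ext_key (h : ExtProp x y ε) (S D : ℝ) :
    ‖S • x + D • y‖ ≤ max |S| |D| + ε * |D| := by
  obtain ⟨hε, hε1, hx, h1, h2⟩ := h
  have hy : ‖y‖ ≤ 1 + ε := ext_norm_y ⟨hε, hε1, hx, h1, h2⟩
  -- helper for S ≥ 0
  have main : ∀ S D : ℝ, 0 ≤ S → ‖S • x + D • y‖ ≤ max |S| |D| + ε * |D| := by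
    intro S D hS
    rcases le_total 0 D with hD | hD
    · rcases le_total D S with hDS | hDS
      · -- 0 ≤ D ≤ S : S•x + D•y = (S-D)•x + D•(x+y)
        have hid : S • x + D • y = (S - D) • x + D • (x + y) := by
          rw [smul_add, sub_smul]; abel
        rw [hid]
        have : ‖(S - D) • x + D • (x + y)‖ ≤ (S - D) * ‖x‖ + D * ‖x + y‖ := by
          calc ‖(S - D) • x + D • (x + y)‖ ≤ ‖(S - D) • x‖ + ‖D • (x + y)‖ := norm_add_le _ _
            _ = (S - D) * ‖x‖ + D * ‖x + y‖ := by
                rw [norm_smul, norm_smul, Real.norm_eq_abs, Real.norm_eq_abs,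
                  abs_of_nonneg (by linarith), abs_of_nonneg hD]
        have hmax : max |S| |D| = S := by
          rw [abs_of_nonneg hS, abs_of_nonneg hD]; exact max_eq_left hDS
        rw [hmax, abs_of_nonneg hD]
        nlinarith [norm_nonneg (x + y)]
      · -- 0 ≤ S ≤ D : S•x + D•y = S•(x+y) + (D-S)•y
        have hid : S • x + D • y = S • (x + y) + (D - S) • y := by
          rw [smul_add, sub_smul]; abel
        rw [hid]
        have : ‖S • (x + y) + (D - S) • y‖ ≤ S * ‖x + y‖ + (D - S) * ‖y‖ := by
          calc ‖S • (x + y) + (D - S) • y‖ ≤ ‖S • (x + y)‖ + ‖(D - S) • y‖ := norm_add_le _ _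
            _ = S * ‖x + y‖ + (D - S) * ‖y‖ := by
                rw [norm_smul, norm_smul, Real.norm_eq_abs, Real.norm_eq_abs,
                  abs_of_nonneg hS, abs_of_nonneg (by linarith)]
        have hmax : max |S| |D| = D := by
          rw [abs_of_nonneg hS, abs_of_nonneg hD]; exact max_eq_right hDS
        rw [hmax, abs_of_nonneg hD]
        nlinarith
    · rcases le_total (-D) S with hDS | hDS
      · -- D ≤ 0, -D ≤ S : S•x + D•y = (S+D)•x + (-D)•(x-y)
        have hid : S • x + D • y = (S + D) • x + (-D) • (x - y) := by
          rw [smul_sub, add_smul]; module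
        rw [hid]
        have : ‖(S + D) • x + (-D) • (x - y)‖ ≤ (S + D) * ‖x‖ + (-D) * ‖x - y‖ := by
          calc ‖(S + D) • x + (-D) • (x - y)‖ ≤ ‖(S + D) • x‖ + ‖(-D) • (x - y)‖ :=
              norm_add_le _ _
            _ = (S + D) * ‖x‖ + (-D) * ‖x - y‖ := by
                rw [norm_smul, norm_smul, Real.norm_eq_abs, Real.norm_eq_abs,
                  abs_of_nonneg (by linarith), abs_of_nonneg (by linarith)]
        have hmax : max |S| |D| = S := by
          rw [abs_of_nonneg hS, abs_of_nonpos hD]; exact max_eq_left hDS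
        rw [hmax, abs_of_nonpos hD]
        nlinarith [norm_nonneg (x - y)]
      · -- D ≤ 0, S ≤ -D : S•x + D•y = S•(x-y) + (D+S)•y
        have hid : S • x + D • y = S • (x - y) + (D + S) • y := by
          rw [smul_sub, add_smul]; module
        rw [hid]
        have : ‖S • (x - y) + (D + S) • y‖ ≤ S * ‖x - y‖ + (-(D + S)) * ‖y‖ := by
          calc ‖S • (x - y) + (D + S) • y‖ ≤ ‖S • (x - y)‖ + ‖(D + S) • y‖ := norm_add_le _ _
            _ = S * ‖x - y‖ + (-(D + S)) * ‖y‖ := by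
                rw [norm_smul, norm_smul, Real.norm_eq_abs, Real.norm_eq_abs,
                  abs_of_nonneg hS, abs_of_nonpos (by linarith)]
        have hmax : max |S| |D| = -D := by
          rw [abs_of_nonneg hS, abs_of_nonpos hD]; exact max_eq_right hDS
        rw [hmax, abs_of_nonpos hD]
        nlinarith
  rcases le_total 0 S with hS | hS
  · exact main S D hS
  · have : ‖S • x + D • y‖ = ‖(-S) • x + (-D) • y‖ := by
      rw [← norm_neg]; congr 1; module
    rw [this]
    have := main (-S) (-D) (by linarith)
    simpa [abs_neg] using this

end ExtConstruction
section ExtLemmas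

variable {X : Type} [NormedAddCommGroup X] [NormedSpace ℝ X]
variable {x y : X} {ε : ℝ}

lemma extN_nonneg (v : X × ℝ) : 0 ≤ extN x y ε v := by
  unfold extN
  split
  · next h => exact le_ciInf (fun p => extF_nonneg h.1 v p)
  · positivity

/-- The embedding of `X` is isometric. -/
lemma ext_slice (v : X × ℝ) (hv : v.2 = 0) : extN x y ε v = ‖v.1‖ := by
  unfold extN
  split
  · next h =>
    apply le_antisymm
    · refine ciInf_le_of_le (extF_bdd h.1 v) (0, 0) ?_
      simp [extF, hv]
    · refine le_ciInf fun p => ?_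
      have key := ext_key h p.1 p.2
      have e0 : extF x y ε v p
          = ‖v.1 - p.1 • x - p.2 • y‖ + max |p.1| |p.2| + ε * |p.2| := by
        rw [extF, hv, zero_sub, abs_neg]
      have tri : ‖v.1‖ ≤ ‖v.1 - p.1 • x - p.2 • y‖ + ‖p.1 • x + p.2 • y‖ := by
        have h' := norm_add_le (v.1 - p.1 • x - p.2 • y) (p.1 • x + p.2 • y)
        have e : (v.1 - p.1 • x - p.2 • y) + (p.1 • x + p.2 • y) = v.1 := by abel
        rwa [e] at h'
      rw [e0]
      linarith
  · simp [hv]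

lemma ext_corner1 (h : ExtProp x y ε) : extN x y ε (x + y, 1) ≤ 1 := by
  refine (extN_le_F h _ (1, 1)).trans ?_
  simp [extF]

lemma ext_corner2 (h : ExtProp x y ε) : extN x y ε (x - y, -1) ≤ 1 := by
  refine (extN_le_F h _ (1, -1)).trans ?_
  simp [extF]

lemma ext_tall (h : ExtProp x y ε) : extN x y ε (0, 1) ≤ ε := by
  refine (extN_le_F h _ (0, 0)).trans ?_
  simp [extF]

lemma ext_snd_le (h : ExtProp x y ε) (v : X × ℝ) : ε * |v.2| ≤ extN x y ε v := by
  refine le_extN h v fun p => ?_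
  have h1 : |v.2| ≤ |v.2 - p.2| + |p.2| := by
    have := abs_add_le (v.2 - p.2) p.2
    simpa using this
  have h2 : ε * |p.2| ≤ max |p.1| |p.2| := by
    have h' : ε * |p.2| ≤ 1 * |p.2| := mul_le_mul_of_nonneg_right h.2.1 (abs_nonneg _)
    simpa using h'.trans (le_max_right _ _)
  have h3 : (0:ℝ) ≤ ‖v.1 - p.1 • x - p.2 • y‖ := norm_nonneg _
  unfold extF
  nlinarith [abs_nonneg (v.2 - p.2), h.1]

lemma ext_fst_le (h : ExtProp x y ε) (v : X × ℝ) : ‖v.1‖ ≤ 3 * extN x y ε v := by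
  have key : ‖v.1‖ / 3 ≤ extN x y ε v := by
    refine le_extN h v fun p => ?_
    have hx1 : ‖p.1 • x‖ ≤ |p.1| := by
      rw [norm_smul, Real.norm_eq_abs]
      nlinarith [h.2.2.1, abs_nonneg p.1]
    have hy1 : ‖p.2 • y‖ ≤ 2 * |p.2| := by
      rw [norm_smul, Real.norm_eq_abs]
      have := ext_norm_y h
      nlinarith [abs_nonneg p.2, h.2.1]
    have tri : ‖v.1‖ ≤ ‖v.1 - p.1 • x - p.2 • y‖ + ‖p.1 • x‖ + ‖p.2 • y‖ := by
      have h' := norm_add_le (v.1 - p.1 • x - p.2 • y + p.1 • x) (p.2 • y)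
      have h'' := norm_add_le (v.1 - p.1 • x - p.2 • y) (p.1 • x)
      have e : (v.1 - p.1 • x - p.2 • y + p.1 • x) + p.2 • y = v.1 := by abel
      rw [e] at h'
      linarith
    have hm1 : |p.1| ≤ max |p.1| |p.2| := le_max_left _ _
    have hm2 : |p.2| ≤ max |p.1| |p.2| := le_max_right _ _
    have h0 : (0:ℝ) ≤ ε * |v.2 - p.2| := mul_nonneg h.1.le (abs_nonneg _)
    have hD : (0:ℝ) ≤ ‖v.1 - p.1 • x - p.2 • y‖ := norm_nonneg _
    unfold extF
    linarith
  linarith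

lemma ext_upper (hε1 : ε ≤ 1) (v : X × ℝ) : extN x y ε v ≤ ‖v.1‖ + |v.2| := by
  unfold extN
  split
  · next h =>
    refine ciInf_le_of_le (extF_bdd h.1 v) (0, 0) ?_
    have h' : ε * |v.2| ≤ 1 * |v.2| := mul_le_mul_of_nonneg_right hε1 (abs_nonneg _)
    simp only [extF, zero_smul, sub_zero, abs_zero, max_self, add_zero]
    linarith
  · rfl

lemma extN_add (u v : X × ℝ) : extN x y ε (u + v) ≤ extN x y ε u + extN x y ε v := by
  by_cases h : ExtProp x y ε
  · apply le_of_forall_pos_le_add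
    intro δ hδ
    obtain ⟨p, hp⟩ : ∃ p, extF x y ε u p < extN x y ε u + δ / 2 := by
      rw [extN_eq h]
      apply exists_lt_of_ciInf_lt
      rw [← extN_eq h]
      linarith [extN_nonneg (x := x) (y := y) (ε := ε) u]
    obtain ⟨q, hq⟩ : ∃ q, extF x y ε v q < extN x y ε v + δ / 2 := by
      rw [extN_eq h]
      apply exists_lt_of_ciInf_lt
      rw [← extN_eq h]
      linarith [extN_nonneg (x := x) (y := y) (ε := ε) v]
    have hle : extN x y ε (u + v) ≤ extF x y ε (u + v) (p + q) := extN_le_F h _ _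
    have hsub : extF x y ε (u + v) (p + q) ≤ extF x y ε u p + extF x y ε v q := by
      unfold extF
      have e1 : ‖(u + v).1 - (p + q).1 • x - (p + q).2 • y‖
          ≤ ‖u.1 - p.1 • x - p.2 • y‖ + ‖v.1 - q.1 • x - q.2 • y‖ := by
        have e : (u + v).1 - (p + q).1 • x - (p + q).2 • y
            = (u.1 - p.1 • x - p.2 • y) + (v.1 - q.1 • x - q.2 • y) := by
          simp only [Prod.fst_add, Prod.snd_add, add_smul]; abel
        rw [e]; exact norm_add_le _ _
      have e2 : max |(p + q).1| |(p + q).2| ≤ max |p.1| |p.2| + max |q.1| |q.2| := by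
        simp only [Prod.fst_add, Prod.snd_add]
        apply max_le
        · exact (abs_add_le _ _).trans (add_le_add (le_max_left _ _) (le_max_left _ _))
        · exact (abs_add_le _ _).trans (add_le_add (le_max_right _ _) (le_max_right _ _))
      have e3 : ε * |(u + v).2 - (p + q).2| ≤ ε * |u.2 - p.2| + ε * |v.2 - q.2| := by
        rw [← mul_add]
        apply mul_le_mul_of_nonneg_left _ h.1.le
        have e : (u + v).2 - (p + q).2 = (u.2 - p.2) + (v.2 - q.2) := by
          simp only [Prod.fst_add, Prod.snd_add]; ring
        rw [e]; exact abs_add_le _ _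
      linarith
    linarith
  · simp only [extN, if_neg h]
    have e1 : ‖(u + v).1‖ ≤ ‖u.1‖ + ‖v.1‖ := norm_add_le _ _
    have e2 : |(u + v).2| ≤ |u.2| + |v.2| := abs_add_le _ _
    linarith

lemma extN_neg (v : X × ℝ) : extN x y ε (-v) = extN x y ε v := by
  have key : ∀ w : X × ℝ, extN x y ε (-w) ≤ extN x y ε w := by
    intro w
    by_cases h : ExtProp x y ε
    · refine le_extN h w fun p => ?_
      have e : extF x y ε (-w) (-p) = extF x y ε w p := by
        unfold extF
        have e1 : (-w).1 - (-p).1 • x - (-p).2 • y = -(w.1 - p.1 • x - p.2 • y) := by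
          simp only [Prod.fst_neg, Prod.snd_neg, neg_smul]; abel
        rw [e1, norm_neg]
        have e2 : (-w).2 - (-p).2 = -(w.2 - p.2) := by
          simp only [Prod.snd_neg]; ring
        rw [e2, abs_neg]
        simp [abs_neg]
      calc extN x y ε (-w) ≤ extF x y ε (-w) (-p) := extN_le_F h _ _
        _ = extF x y ε w p := e
    · simp only [extN, if_neg h, Prod.fst_neg, Prod.snd_neg, norm_neg, abs_neg, le_refl]
  have h1 := key v
  have h2 := key (-v)
  rw [neg_neg] at h2
  exact le_antisymm h1 h2

lemma extN_zero : extN x y ε (0 : X × ℝ) = 0 := by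
  refine le_antisymm ?_ (extN_nonneg _)
  by_cases h : ExtProp x y ε
  · refine (extN_le_F h _ (0, 0)).trans ?_
    simp [extF]
  · simp [extN, if_neg h]

lemma extN_smul_le (c : ℝ) (v : X × ℝ) : extN x y ε (c • v) ≤ |c| * extN x y ε v := by
  rcases eq_or_ne c 0 with rfl | hc
  · simp [extN_zero]
  · by_cases h : ExtProp x y ε
    · have hF : ∀ p : ℝ × ℝ, extF x y ε (c • v) (c • p) = |c| * extF x y ε v p := by
        intro p
        unfold extF
        have e1 : (c • v).1 - (c • p).1 • x - (c • p).2 • y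
            = c • (v.1 - p.1 • x - p.2 • y) := by
          simp only [Prod.smul_fst, Prod.smul_snd, smul_eq_mul, mul_smul, smul_sub]
        have e2 : max |(c • p).1| |(c • p).2| = |c| * max |p.1| |p.2| := by
          simp only [Prod.smul_fst, Prod.smul_snd, smul_eq_mul, abs_mul]
          exact (mul_max_of_nonneg _ _ (abs_nonneg c)).symm
        have e3 : |(c • v).2 - (c • p).2| = |c| * |v.2 - p.2| := by
          simp only [Prod.smul_fst, Prod.smul_snd, smul_eq_mul]
          rw [← abs_mul, mul_sub]
        rw [e1, e2, e3, norm_smul, Real.norm_eq_abs]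
        ring
      have h2 : extN x y ε (c • v) / |c| ≤ extN x y ε v := by
        refine le_extN h v fun p => ?_
        rw [div_le_iff₀ (abs_pos.mpr hc)]
        calc extN x y ε (c • v) ≤ extF x y ε (c • v) (c • p) := extN_le_F h _ _
          _ = |c| * extF x y ε v p := hF p
          _ = extF x y ε v p * |c| := by ring
      have := (div_le_iff₀ (abs_pos.mpr hc)).mp h2
      linarith
    · simp only [extN, if_neg h, Prod.smul_fst, Prod.smul_snd, smul_eq_mul, norm_smul,
        Real.norm_eq_abs, abs_mul]
      ring_nf
      exact le_refl _

end ExtLemmas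
section ExtSpace

/-- Type synonym for `X × ℝ` carrying the auxiliary norm. -/
def ExtAux (X : Type) [NormedAddCommGroup X] [NormedSpace ℝ X]
    (x y : X) (ε : ℝ) : Type := X × ℝ

variable {X : Type} [NormedAddCommGroup X] [NormedSpace ℝ X] (x y : X) (ε : ℝ)

/-- The identity map `X × ℝ → ExtAux X x y ε`. -/
def ExtAux.of (v : X × ℝ) : ExtAux X x y ε := v

/-- The identity map `ExtAux X x y ε → X × ℝ`. -/
def ExtAux.down (v : ExtAux X x y ε) : X × ℝ := v

noncomputable instance : AddCommGroup (ExtAux X x y ε) := inferInstanceAs (AddCommGroup (X × ℝ))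
noncomputable instance : Module ℝ (ExtAux X x y ε) := inferInstanceAs (Module ℝ (X × ℝ))

noncomputable instance : NormedAddCommGroup (ExtAux X x y ε) :=
  AddGroupNorm.toNormedAddCommGroup
    { toFun := fun v => extN x y ε (v : X × ℝ)
      map_zero' := extN_zero
      add_le' := fun u v => extN_add u v
      neg' := fun v => extN_neg v
      eq_zero_of_map_eq_zero' := by
        intro v hv
        have hv' : extN x y ε (v : X × ℝ) = 0 := hv
        by_cases h : ExtProp x y ε
        · have h1 := ext_snd_le h (v : X × ℝ)
          have h2 := ext_fst_le h (v : X × ℝ)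
          rw [hv'] at h1 h2
          have hv2 : (v : X × ℝ).2 = 0 := by
            have := h.1
            have habs : |(v : X × ℝ).2| ≤ 0 := by nlinarith [abs_nonneg (v : X × ℝ).2]
            have := abs_nonneg (v : X × ℝ).2
            exact abs_eq_zero.mp (le_antisymm habs this)
          have hv1 : (v : X × ℝ).1 = 0 := by
            have habs : ‖(v : X × ℝ).1‖ ≤ 0 := by linarith
            exact norm_eq_zero.mp (le_antisymm habs (norm_nonneg _))
          show (v : X × ℝ) = 0
          exact Prod.ext hv1 hv2
        · simp only [extN, if_neg h] at hv
          have h1 : ‖(v : X × ℝ).1‖ = 0 ∧ |(v : X × ℝ).2| = 0 := by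
            constructor <;> nlinarith [norm_nonneg (v : X × ℝ).1, abs_nonneg (v : X × ℝ).2]
          show (v : X × ℝ) = 0
          exact Prod.ext (norm_eq_zero.mp h1.1) (abs_eq_zero.mp h1.2) }

noncomputable instance : NormedSpace ℝ (ExtAux X x y ε) where
  norm_smul_le c v := extN_smul_le c (v : X × ℝ)

lemma ExtAux.norm_def (v : ExtAux X x y ε) : ‖v‖ = extN x y ε (v : X × ℝ) := rfl

instance [CompleteSpace X] : CompleteSpace (ExtAux X x y ε) := by
  obtain ⟨c, hc0, hc1, hc2⟩ : ∃ c : ℝ, 0 < c ∧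
      (∀ v : X × ℝ, ‖v.1‖ ≤ c * extN x y ε v ∧ |v.2| ≤ c * extN x y ε v) ∧
      (∀ v : X × ℝ, extN x y ε v ≤ c * (‖v.1‖ + |v.2|)) := by
    by_cases h : ExtProp x y ε
    · have hε := h.1
      have hε1 := h.2.1
      refine ⟨3 + 1/ε, by positivity, fun v => ⟨?_, ?_⟩, fun v => ?_⟩
      · have h1 := ext_fst_le h v
        have h2 := extN_nonneg (x := x) (y := y) (ε := ε) v
        have : (0:ℝ) < 1/ε := by positivity
        nlinarith
      · have h1 := ext_snd_le h v
        have h2 := extN_nonneg (x := x) (y := y) (ε := ε) v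
        have h3 : |v.2| ≤ (1/ε) * extN x y ε v := by
          rw [div_mul_eq_mul_div, le_div_iff₀ h.1]
          linarith [h1]
        nlinarith
      · have h5 := ext_upper (x := x) (y := y) h.2.1 v
        have h4 : (1:ℝ) ≤ 3 + 1/ε := by
          have : (0:ℝ) < 1/ε := by positivity
          linarith
        nlinarith [norm_nonneg v.1, abs_nonneg v.2]
    · refine ⟨1, one_pos, fun v => ⟨?_, ?_⟩, fun v => ?_⟩ <;>
        simp only [extN, if_neg h, one_mul]
      · linarith [abs_nonneg v.2]
      · linarith [norm_nonneg v.1]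
      · exact le_refl _
  apply Metric.complete_of_cauchySeq_tendsto
  intro u hu
  have hdist : ∀ m n : ℕ, dist (u m) (u n) = extN x y ε ((u m : X × ℝ) - (u n : X × ℝ)) := by
    intro m n
    rw [dist_eq_norm]
    rfl
  have h1 : CauchySeq (fun n => (u n : X × ℝ).1) := by
    rw [Metric.cauchySeq_iff] at hu ⊢
    intro δ hδ
    obtain ⟨N, hN⟩ := hu (δ / c) (by positivity)
    refine ⟨N, fun m hm n hn => ?_⟩
    have h' := hN m hm n hn
    rw [hdist] at h'
    have hb := (hc1 ((u m : X × ℝ) - (u n : X × ℝ))).1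
    have e : ((u m : X × ℝ) - (u n : X × ℝ)).1 = (u m : X × ℝ).1 - (u n : X × ℝ).1 := rfl
    rw [e] at hb
    rw [dist_eq_norm]
    calc ‖(u m : X × ℝ).1 - (u n : X × ℝ).1‖ ≤ c * extN x y ε ((u m : X × ℝ) - (u n : X × ℝ)) := hb
      _ < c * (δ / c) := by exact mul_lt_mul_of_pos_left h' hc0
      _ = δ := by field_simp
  have h2 : CauchySeq (fun n => (u n : X × ℝ).2) := by
    rw [Metric.cauchySeq_iff] at hu ⊢
    intro δ hδ
    obtain ⟨N, hN⟩ := hu (δ / c) (by positivity)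
    refine ⟨N, fun m hm n hn => ?_⟩
    have h' := hN m hm n hn
    rw [hdist] at h'
    have hb := (hc1 ((u m : X × ℝ) - (u n : X × ℝ))).2
    have e : ((u m : X × ℝ) - (u n : X × ℝ)).2 = (u m : X × ℝ).2 - (u n : X × ℝ).2 := rfl
    rw [e] at hb
    rw [Real.dist_eq]
    calc |(u m : X × ℝ).2 - (u n : X × ℝ).2| ≤ c * extN x y ε ((u m : X × ℝ) - (u n : X × ℝ)) := hb
      _ < c * (δ / c) := mul_lt_mul_of_pos_left h' hc0
      _ = δ := by field_simp
  obtain ⟨a, ha⟩ := cauchySeq_tendsto_of_complete h1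
  obtain ⟨b, hb⟩ := cauchySeq_tendsto_of_complete h2
  refine ⟨ExtAux.of x y ε (a, b), ?_⟩
  rw [tendsto_iff_dist_tendsto_zero]
  have hbound : ∀ n, dist (u n) (ExtAux.of x y ε (a, b))
      ≤ c * (‖(u n : X × ℝ).1 - a‖ + |(u n : X × ℝ).2 - b|) := by
    intro n
    rw [dist_eq_norm]
    have e2 : (ExtAux.down x y ε (u n) - ((a, b) : X × ℝ)).1 = (u n : X × ℝ).1 - a := rfl
    have e3 : (ExtAux.down x y ε (u n) - ((a, b) : X × ℝ)).2 = (u n : X × ℝ).2 - b := rfl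
    have e : ‖u n - ExtAux.of x y ε (a, b)‖
        = extN x y ε (ExtAux.down x y ε (u n) - (a, b)) := rfl
    rw [e]
    calc extN x y ε (ExtAux.down x y ε (u n) - (a, b))
        ≤ c * (‖(ExtAux.down x y ε (u n) - ((a, b) : X × ℝ)).1‖
          + |(ExtAux.down x y ε (u n) - ((a, b) : X × ℝ)).2|) := hc2 _
      _ = c * (‖(u n : X × ℝ).1 - a‖ + |(u n : X × ℝ).2 - b|) := by rw [e2, e3]
  apply squeeze_zero (fun n => dist_nonneg) hbound
  have hx1 : Tendsto (fun n => ‖(u n : X × ℝ).1 - a‖) atTop (𝓝 0) :=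
    tendsto_iff_norm_sub_tendsto_zero.mp ha
  have hx2 : Tendsto (fun n => |(u n : X × ℝ).2 - b|) atTop (𝓝 0) := by
    have h' : Tendsto (fun n => (u n : X × ℝ).2 - b) atTop (𝓝 (b - b)) :=
      hb.sub tendsto_const_nhds
    rw [sub_self] at h'
    simpa using h'.abs
  have := (hx1.add hx2).const_mul c
  simpa using this

end ExtSpace
section Emb

variable {X : Type} [NormedAddCommGroup X] [NormedSpace ℝ X] (x y : X) (ε : ℝ)

/-- The isometric embedding of `X` into `ExtAux X x y ε`. -/
noncomputable def extJ : X →ₗᵢ[ℝ] ExtAux X x y ε where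
  toFun := fun z => ExtAux.of x y ε (z, 0)
  map_add' := fun a b => by
    show ExtAux.of x y ε (a + b, 0) = ExtAux.of x y ε ((a, 0) + (b, 0))
    simp [ExtAux.of, Prod.ext_iff]
    change ((a + b, 0) : X × ℝ) = @HAdd.hAdd (X × ℝ) (X × ℝ) (X × ℝ) instHAdd (a, 0) (b, 0); simp
  map_smul' := fun c a => by
    show ExtAux.of x y ε (c • a, 0) = ExtAux.of x y ε (c • (a, 0))
    simp [ExtAux.of, Prod.ext_iff]
    change ((c • a, 0) : X × ℝ) = @HSMul.hSMul ℝ (X × ℝ) (X × ℝ) instHSMul c (a, 0); simp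
  norm_map' := fun z => by
    show extN x y ε (z, 0) = ‖z‖
    exact ext_slice _ rfl

lemma extJ_norm (z : X) (t : ℝ) : ‖ExtAux.of x y ε (z, t)‖ = extN x y ε (z, t) := rfl

lemma extOf_add (v w : X × ℝ) :
    ExtAux.of x y ε (v + w) = ExtAux.of x y ε v + ExtAux.of x y ε w := rfl

lemma extOf_sub (v w : X × ℝ) :
    ExtAux.of x y ε (v - w) = ExtAux.of x y ε v - ExtAux.of x y ε w := rfl

end Emb
section Step

variable {X : Type} [NormedAddCommGroup X] [NormedSpace ℝ X] [CompleteSpace X]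

lemma ext_step
    (hX : ∀ (Z : Type) [NormedAddCommGroup Z] [NormedSpace ℝ Z] [CompleteSpace Z]
      (J : X →ₗᵢ[ℝ] Z), IsAIIdeal Z (LinearMap.range J.toLinearMap))
    {x y : X} {ε : ℝ} (h : ExtProp x y ε) {ε' : ℝ} (hε' : 0 < ε') (hε'1 : ε' ≤ 1) :
    ∃ y' : X, ‖x + y'‖ ≤ 1 + ε' ∧ ‖x - y'‖ ≤ 1 + ε' ∧ ‖y' - y‖ ≤ 2 * ε ∧ ε / 2 ≤ ‖y'‖ := by
  classical
  have hεpos := h.1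
  have hhalf : ε / 2 ≤ (1 + ε')⁻¹ * ε := by
    have h1ε' : (0:ℝ) < 1 + ε' := by linarith
    have hle : 1 / 2 ≤ 1 / (1 + ε') := one_div_le_one_div_of_le h1ε' (by linarith)
    rw [one_div] at hle
    calc ε / 2 = (1/2) * ε := by ring
      _ ≤ (1 + ε')⁻¹ * ε := by
          apply mul_le_mul_of_nonneg_right _ hεpos.le
          rw [one_div] at hle ⊢
          exact hle
  set Z := ExtAux X x y ε with hZ
  set J : X →ₗᵢ[ℝ] Z := extJ x y ε with hJ
  set w : Z := ExtAux.of x y ε (y, 1) with hw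
  set E : Submodule ℝ Z := Submodule.span ℝ ({J x, J y, w} : Set Z) with hE
  have hfin : FiniteDimensional ℝ E := by
    apply FiniteDimensional.span_of_finite
    exact ((Set.finite_singleton w).insert _).insert _
  obtain ⟨T, hfix, hbnd⟩ := hX Z J ε' hε' E hfin
  have hm1 : J x ∈ E := Submodule.subset_span (by simp)
  have hm2 : J y ∈ E := Submodule.subset_span (by simp)
  have hm3 : w ∈ E := Submodule.subset_span (by simp)
  set e₁ : E := ⟨J x, hm1⟩ with he₁
  set e₂ : E := ⟨J y, hm2⟩ with he₂
  set e₃ : E := ⟨w, hm3⟩ with he₃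
  have hf1 : ((T e₁ : LinearMap.range J.toLinearMap) : Z) = J x := hfix e₁ ⟨x, rfl⟩
  have hf2 : ((T e₂ : LinearMap.range J.toLinearMap) : Z) = J y := hfix e₂ ⟨y, rfl⟩
  obtain ⟨y', hy'⟩ := LinearMap.mem_range.mp (T e₃).2
  have hJy' : J y' = ((T e₃ : LinearMap.range J.toLinearMap) : Z) := hy'
  -- norms of the key vectors in Z
  have hw1 : ‖J x + w‖ ≤ 1 := by
    have e : J x + w = ExtAux.of x y ε (x + y, 1) := by
      show ExtAux.of x y ε ((x, 0) + (y, 1)) = _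
      norm_num [ExtAux.of, Prod.ext_iff]
      change @HAdd.hAdd (X × ℝ) (X × ℝ) (X × ℝ) instHAdd (x, 0) (y, 1) = (x + y, 1); simp
    rw [e, extJ_norm]
    exact ext_corner1 h
  have hw2 : ‖J x - w‖ ≤ 1 := by
    have e : J x - w = ExtAux.of x y ε (x - y, -1) := by
      show ExtAux.of x y ε ((x, 0) - (y, 1)) = _
      norm_num [ExtAux.of, Prod.ext_iff]
      change @HSub.hSub (X × ℝ) (X × ℝ) (X × ℝ) instHSub (x, 0) (y, 1) = (x - y, -1); simp
    rw [e, extJ_norm]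
    exact ext_corner2 h
  have hw3 : ‖w - J y‖ ≤ ε := by
    have e : w - J y = ExtAux.of x y ε (0, 1) := by
      show ExtAux.of x y ε ((y, 1) - (y, 0)) = _
      norm_num [ExtAux.of, Prod.ext_iff]
      change @HSub.hSub (X × ℝ) (X × ℝ) (X × ℝ) instHSub (y, 1) (y, 0) = (0, 1); simp
    rw [e, extJ_norm]
    exact ext_tall h
  have hw4 : ε ≤ ‖w‖ := by
    rw [hw, extJ_norm]
    have := ext_snd_le h (y, 1)
    simpa using this
  have h1ε' : (0:ℝ) < 1 + ε' := by linarith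
  refine ⟨y', ?_, ?_, ?_, ?_⟩
  · -- ‖x + y'‖ ≤ 1 + ε'
    have hcoe : ((T (e₁ + e₃) : LinearMap.range J.toLinearMap) : Z) = J x + J y' := by
      rw [map_add, Submodule.coe_add, hf1, hJy']
    have hnorm := (hbnd (e₁ + e₃)).2
    have hval : ((e₁ + e₃ : E) : Z) = J x + w := by
      rw [Submodule.coe_add]
    rw [hcoe, hval] at hnorm
    calc ‖x + y'‖ = ‖J (x + y')‖ := (J.norm_map _).symm
      _ = ‖J x + J y'‖ := by rw [map_add]
      _ ≤ (1 + ε') * ‖J x + w‖ := hnorm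
      _ ≤ (1 + ε') * 1 := by
          exact mul_le_mul_of_nonneg_left hw1 h1ε'.le
      _ = 1 + ε' := by ring
  · have hcoe : ((T (e₁ - e₃) : LinearMap.range J.toLinearMap) : Z) = J x - J y' := by
      rw [map_sub, Submodule.coe_sub, hf1, hJy']
    have hnorm := (hbnd (e₁ - e₃)).2
    have hval : ((e₁ - e₃ : E) : Z) = J x - w := by
      rw [Submodule.coe_sub]
    rw [hcoe, hval] at hnorm
    calc ‖x - y'‖ = ‖J (x - y')‖ := (J.norm_map _).symm
      _ = ‖J x - J y'‖ := by rw [map_sub]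
      _ ≤ (1 + ε') * ‖J x - w‖ := hnorm
      _ ≤ (1 + ε') * 1 := mul_le_mul_of_nonneg_left hw2 h1ε'.le
      _ = 1 + ε' := by ring
  · have hcoe : ((T (e₃ - e₂) : LinearMap.range J.toLinearMap) : Z) = J y' - J y := by
      rw [map_sub, Submodule.coe_sub, hf2, hJy']
    have hnorm := (hbnd (e₃ - e₂)).2
    have hval : ((e₃ - e₂ : E) : Z) = w - J y := by
      rw [Submodule.coe_sub]
    rw [hcoe, hval] at hnorm
    have hε := h.1
    calc ‖y' - y‖ = ‖J (y' - y)‖ := (J.norm_map _).symm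
      _ = ‖J y' - J y‖ := by rw [map_sub]
      _ ≤ (1 + ε') * ‖w - J y‖ := hnorm
      _ ≤ (1 + ε') * ε := mul_le_mul_of_nonneg_left hw3 h1ε'.le
      _ ≤ 2 * ε := by nlinarith [hεpos, hε'1]
  · have hnorm := (hbnd e₃).1
    have hval : ((e₃ : E) : Z) = w := rfl
    rw [hval, hJy'.symm] at hnorm
    have hkey : (1 + ε')⁻¹ * ‖w‖ ≤ ‖J y'‖ := hnorm
    rw [J.norm_map] at hkey
    have hpos : (0:ℝ) < (1 + ε')⁻¹ := inv_pos.mpr h1ε'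
    calc ε / 2 ≤ (1 + ε')⁻¹ * ε := hhalf
      _ ≤ (1 + ε')⁻¹ * ‖w‖ := mul_le_mul_of_nonneg_left hw4 hpos.le
      _ ≤ ‖y'‖ := hkey

end Step

/-- A nonzero Lindenstrauss space which is an ai-ideal in every superspace (i.e. a Gurariĭ
space) has no extreme points in its closed unit ball. -/
theorem extremePoints_eq_empty_of_lindenstrauss_gurarii
    (X : Type) [NormedAddCommGroup X] [NormedSpace ℝ X] [CompleteSpace X] [Nontrivial X]
    (hL : IsLindenstrauss X)
    (hX : ∀ (Z : Type) [NormedAddCommGroup Z] [NormedSpace ℝ Z] [CompleteSpace Z]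
      (J : X →ₗᵢ[ℝ] Z), IsAIIdeal Z (LinearMap.range J.toLinearMap)) :
    Set.extremePoints ℝ (Metric.closedBall (0 : X) 1) = ∅ := by
  classical
  rw [Set.eq_empty_iff_forall_notMem]
  intro x hx
  obtain ⟨hxB, hext⟩ := hx
  have hx1 : ‖x‖ ≤ 1 := mem_closedBall_zero_iff.mp hxB
  set β : ℕ → ℝ := fun n => (1/16 : ℝ)^n with hβdef
  have hβpos : ∀ n, 0 < β n := fun n => by positivity
  have hβ1 : ∀ n, β n ≤ 1 := fun n => pow_le_one₀ (by norm_num) (by norm_num)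
  have key : ∀ (n : ℕ) (y : X), ‖x + y‖ ≤ 1 + β n → ‖x - y‖ ≤ 1 + β n →
      ∃ y' : X, (‖x + y'‖ ≤ 1 + β (n+1) ∧ ‖x - y'‖ ≤ 1 + β (n+1)) ∧
        ‖y' - y‖ ≤ 2 * β n ∧ β n / 2 ≤ ‖y'‖ := by
    intro n y h1 h2
    have h : ExtProp x y (β n) := ⟨hβpos n, hβ1 n, hx1, h1, h2⟩
    obtain ⟨y', a, b, c, d⟩ := ext_step hX h (hβpos (n+1)) (hβ1 (n+1))
    exact ⟨y', ⟨a, b⟩, c, d⟩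
  choose! f hf using key
  let u : ℕ → X := fun n => Nat.rec (0 : X) (fun k yk => f k yk) n
  have hus : ∀ n, u (n+1) = f n (u n) := fun n => rfl
  have hQ : ∀ n, ‖x + u n‖ ≤ 1 + β n ∧ ‖x - u n‖ ≤ 1 + β n := by
    intro n
    induction n with
    | zero =>
      have h0 : u 0 = 0 := rfl
      rw [h0]
      constructor
      · simpa using le_trans hx1 (by norm_num [hβdef])
      · simpa using le_trans hx1 (by norm_num [hβdef])
    | succ n ih =>
      rw [hus]
      exact (hf n (u n) ih.1 ih.2).1
  have hstep : ∀ n, (‖f n (u n) - u n‖ ≤ 2 * β n ∧ β n / 2 ≤ ‖f n (u n)‖) :=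
    fun n => (hf n (u n) (hQ n).1 (hQ n).2).2
  have hd : ∀ n, dist (u n) (u (n+1)) ≤ 2 * (1/16 : ℝ)^n := by
    intro n
    rw [dist_eq_norm, norm_sub_rev, hus]
    exact (hstep n).1
  have hcau : CauchySeq u := cauchySeq_of_le_geometric (1/16) 2 (by norm_num) hd
  obtain ⟨l, hl⟩ := cauchySeq_tendsto_of_complete hcau
  have hβlim : Filter.Tendsto (fun n => 1 + β n) Filter.atTop (nhds 1) := by
    have h0 : Filter.Tendsto β Filter.atTop (nhds 0) :=
      tendsto_pow_atTop_nhds_zero_of_lt_one (by norm_num) (by norm_num)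
    simpa using tendsto_const_nhds.add h0
  have hxl1 : ‖x + l‖ ≤ 1 := by
    have t1 : Filter.Tendsto (fun n => ‖x + u n‖) Filter.atTop (nhds ‖x + l‖) :=
      (tendsto_const_nhds.add hl).norm
    exact le_of_tendsto_of_tendsto' t1 hβlim (fun n => (hQ n).1)
  have hxl2 : ‖x - l‖ ≤ 1 := by
    have t1 : Filter.Tendsto (fun n => ‖x - u n‖) Filter.atTop (nhds ‖x - l‖) :=
      (tendsto_const_nhds.sub hl).norm
    exact le_of_tendsto_of_tendsto' t1 hβlim (fun n => (hQ n).2)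
  have hu1 : (1:ℝ)/2 ≤ ‖u 1‖ := by
    have := (hstep 0).2
    rw [← hus 0] at this
    simpa [hβdef] using this
  have hdist1 : dist (u 1) l ≤ 2 * (1/16 : ℝ)^1 / (1 - 1/16) := by
    exact dist_le_of_le_geometric_of_tendsto (1/16) 2 (by norm_num) hd hl 1
  have hlpos : (0:ℝ) < ‖l‖ := by
    have h1 : ‖u 1‖ - ‖u 1 - l‖ ≤ ‖l‖ := by
      have h2 : ‖u 1‖ - ‖l‖ ≤ ‖u 1 - l‖ := norm_sub_norm_le (u 1) l
      linarith
    have h3 : ‖u 1 - l‖ ≤ 2/15 := by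
      rw [← dist_eq_norm]
      calc dist (u 1) l ≤ 2 * (1/16 : ℝ)^1 / (1 - 1/16) := hdist1
        _ = 2/15 := by norm_num
    linarith
  have hlne : l ≠ 0 := fun h0 => by rw [h0, norm_zero] at hlpos; exact lt_irrefl 0 hlpos
  have hmem1 : x + l ∈ Metric.closedBall (0 : X) 1 := mem_closedBall_zero_iff.mpr hxl1
  have hmem2 : x - l ∈ Metric.closedBall (0 : X) 1 := mem_closedBall_zero_iff.mpr hxl2
  have hseg : x ∈ openSegment ℝ (x + l) (x - l) := by
    refine ⟨1/2, 1/2, by norm_num, by norm_num, by norm_num, ?_⟩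
    module
  have hcontr := hext hmem1 hmem2 hseg
  have : l = 0 := by
    have h1 := hcontr
    have : x + l = x + 0 := by rw [add_zero]; exact h1
    exact add_left_cancel this
  exact hlne this
end

section
/- For every 1 ≤ p < ∞, t(L_p[0,1]) = 2^{1/p}, where L_p[0,1] is the Banach space of (equivalence classes of) real-valued p-integrable functions on [0,1] with respect to Lebesgue measure, with norm ‖f‖ = (∫_0^1 |f|^p)^{1/p}. -/
open ENNReal

attribute [local instance] MeasureTheory.Measure.Subtype.measureSpace

section ThinAux

open MeasureTheory Set

variable {α : Type*} [MeasurableSpace α] {ν : MeasureTheory.Measure α} {p : ℝ≥0∞}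

lemma eLpNorm_rpow_split (hp0 : p ≠ 0) (hpt : p ≠ ⊤) (f : α → ℝ) {A : Set α}
    (hA : MeasurableSet A) :
    eLpNorm f p ν ^ p.toReal =
      eLpNorm f p (ν.restrict A) ^ p.toReal + eLpNorm f p (ν.restrict Aᶜ) ^ p.toReal := by
  have hpr : p.toReal ≠ 0 := ENNReal.toReal_ne_zero.mpr ⟨hp0, hpt⟩
  simp only [eLpNorm_eq_lintegral_rpow_enorm_toReal hp0 hpt, ← ENNReal.rpow_mul,
    one_div, inv_mul_cancel₀ hpr, ENNReal.rpow_one]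
  exact (lintegral_add_compl _ hA).symm

lemma eLpNorm_rpow_sum_le (hp0 : p ≠ 0) (hpt : p ≠ ⊤) (f : α → ℝ) {N : ℕ}
    {A : Fin N → Set α} (hA : ∀ j, MeasurableSet (A j))
    (hd : Pairwise (Function.onFun Disjoint A)) :
    ∑ j, eLpNorm f p (ν.restrict (A j)) ^ p.toReal ≤ eLpNorm f p ν ^ p.toReal := by
  have hpr : p.toReal ≠ 0 := ENNReal.toReal_ne_zero.mpr ⟨hp0, hpt⟩
  simp only [eLpNorm_eq_lintegral_rpow_enorm_toReal hp0 hpt, ← ENNReal.rpow_mul,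
    one_div, inv_mul_cancel₀ hpr, ENNReal.rpow_one]
  rw [← tsum_fintype (L := .unconditional _), ← lintegral_iUnion hA hd]
  exact lintegral_mono' (Measure.restrict_le_self) le_rfl

lemma enorm_rpow_mul (N : ℕ) (hN : N ≠ 0) {pr : ℝ} (hpr : 0 < pr) :
    (‖(N:ℝ) ^ (1/pr)‖₊ : ℝ≥0∞) * ((N : ℝ≥0∞))⁻¹ ^ (1/pr) = 1 := by
  have h1 : (‖(N:ℝ) ^ (1/pr)‖₊ : ℝ≥0∞) = ((N : ℝ≥0∞)) ^ (1/pr) := by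
    rw [← enorm_eq_nnnorm, Real.enorm_eq_ofReal (by positivity), ← ENNReal.ofReal_rpow_of_nonneg
      (by positivity) (by positivity), ENNReal.ofReal_natCast]
  rw [h1, ← ENNReal.mul_rpow_of_ne_top (natCast_ne_top N)
    (ENNReal.inv_ne_top.mpr (Nat.cast_ne_zero.mpr hN)),
    ENNReal.mul_inv_cancel (Nat.cast_ne_zero.mpr hN) (natCast_ne_top N), ENNReal.one_rpow]

namespace ThinLp

abbrev I : Set ℝ := Set.Icc (0:ℝ) 1

noncomputable abbrev μ : Measure I := volume

lemma meas_preimage {B : Set ℝ} (hBI : B ⊆ I) :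
    μ (Subtype.val ⁻¹' B) = volume B := by
  rw [show (μ : Measure I) = Measure.comap Subtype.val volume from rfl,
    (MeasurableEmbedding.subtype_coe measurableSet_Icc).comap_apply,
    Subtype.image_preimage_coe, Set.inter_eq_self_of_subset_right hBI]

def A (N : ℕ) (j : Fin N) : Set I := Subtype.val ⁻¹' Set.Ico ((j:ℝ)/N) (((j:ℝ)+1)/N)

lemma measA {N : ℕ} (j : Fin N) : MeasurableSet (A N j) :=
  measurable_subtype_coe measurableSet_Ico

lemma volA {N : ℕ} (j : Fin N) : μ (A N j) = ((N : ℝ≥0∞))⁻¹ := by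
  have hN : 0 < (N:ℝ) := by exact_mod_cast j.pos
  have hsub : Set.Ico ((j:ℝ)/N) (((j:ℝ)+1)/N) ⊆ I := by
    intro x hx
    refine ⟨le_trans (by positivity) hx.1, le_trans hx.2.le ?_⟩
    rw [div_le_one hN]
    exact_mod_cast Nat.succ_le_of_lt j.2
  rw [A, meas_preimage hsub, Real.volume_Ico,
    show ((j:ℝ)+1)/N - (j:ℝ)/N = (N:ℝ)⁻¹ by field_simp; ring,
    ENNReal.ofReal_inv_of_pos hN, ENNReal.ofReal_natCast]

lemma volA_ne_top {N : ℕ} (j : Fin N) : μ (A N j) ≠ ⊤ := by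
  rw [volA]; exact ENNReal.inv_ne_top.mpr (Nat.cast_ne_zero.mpr j.pos.ne')

lemma disjA {N : ℕ} : Pairwise (Function.onFun Disjoint (A N)) := by
  intro j k h
  have hN : 0 < (N:ℝ) := by exact_mod_cast j.pos
  have key : ∀ a b : Fin N, a < b →
      Disjoint (Set.Ico ((a:ℝ)/N) (((a:ℝ)+1)/N)) (Set.Ico ((b:ℝ)/N) (((b:ℝ)+1)/N)) := by
    intro a b hab
    rw [Set.Ico_disjoint_Ico]
    refine le_trans (min_le_left _ _) (le_trans ?_ (le_max_right _ _))
    gcongr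
    have : (a:ℕ) + 1 ≤ (b:ℕ) := hab
    exact_mod_cast this
  rcases h.lt_or_gt with h | h
  · exact (key _ _ h).preimage Subtype.val
  · exact ((key _ _ h).preimage Subtype.val).symm

variable (p : ℝ≥0∞) [Fact (1 ≤ p)] (hp : p ≠ ⊤)

/-- the normalized indicator of `A N j` as an element of `Lp`. -/
noncomputable def y (N : ℕ) (j : Fin N) : Lp ℝ p μ :=
  indicatorConstLp p (measA j) (volA_ne_top j) ((N:ℝ) ^ (1/p.toReal))

section
include hp

lemma hp0 : p ≠ 0 := by
  have : (1:ℝ≥0∞) ≤ p := Fact.out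
  exact fun h => by simp [h] at this

lemma hpr1 : 1 ≤ p.toReal := by
  have h1 : (1:ℝ≥0∞) ≤ p := Fact.out
  simpa using ENNReal.toReal_mono hp h1

lemma hpr0 : 0 < p.toReal := lt_of_lt_of_le one_pos (hpr1 p hp)

lemma norm_y {N : ℕ} (j : Fin N) : ‖y p N j‖ = 1 := by
  rw [y, norm_indicatorConstLp (hp0 p hp) hp, Measure.real, volA]
  have hN : (0:ℝ) < N := by exact_mod_cast j.pos
  rw [ENNReal.toReal_inv, ENNReal.toReal_natCast, Real.norm_of_nonneg (by positivity),
    ← Real.mul_rpow hN.le (by positivity), mul_inv_cancel₀ hN.ne', Real.one_rpow]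

lemma eLpNorm_y_restrict {N : ℕ} (j : Fin N) :
    eLpNorm (y p N j : I → ℝ) p (μ.restrict (A N j)) = 1 := by
  rw [y, eLpNorm_congr_ae (ae_restrict_of_ae indicatorConstLp_coeFn),
    eLpNorm_congr_ae (indicator_ae_eq_restrict (measA j)),
    eLpNorm_const _ (hp0 p hp) (by
      rw [Ne, Measure.restrict_eq_zero, volA]
      exact ENNReal.inv_ne_zero.mpr (natCast_ne_top N)),
    Measure.restrict_apply_univ, volA]
  exact enorm_rpow_mul N j.pos.ne' (hpr0 p hp)

lemma eLpNorm_sub_y_compl {N : ℕ} (j : Fin N) (f : Lp ℝ p μ) :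
    eLpNorm ((f : I → ℝ) - (y p N j : I → ℝ)) p (μ.restrict (A N j)ᶜ)
      = eLpNorm (f : I → ℝ) p (μ.restrict (A N j)ᶜ) := by
  refine eLpNorm_congr_ae ?_
  have h0 : ⇑(y p N j) =ᵐ[μ] (A N j).indicator fun _ => ((N:ℝ) ^ (1/p.toReal)) :=
    indicatorConstLp_coeFn
  have h1 : (y p N j : I → ℝ) =ᵐ[μ.restrict (A N j)ᶜ] 0 :=
    Filter.EventuallyEq.trans (ae_restrict_of_ae h0) (indicator_ae_eq_restrict_compl (measA j))
  filter_upwards [h1] with a ha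
  simp [ha]

lemma eLpNorm_one {f : Lp ℝ p μ} (hf : ‖f‖ = 1) : eLpNorm (f : I → ℝ) p μ = 1 := by
  have h1 := Lp.norm_def f
  rw [hf] at h1
  have h2 : eLpNorm (f : I → ℝ) p μ ≠ ⊤ := Lp.eLpNorm_ne_top f
  rw [← ENNReal.ofReal_toReal h2, ← h1]
  simp

lemma upper (n : ℕ) (x : Fin n → Lp ℝ p μ) (hx : ∀ i, ‖x i‖ = 1) (ε : ℝ) (hε : 0 < ε) :
    ∃ z : Lp ℝ p μ, ‖z‖ = 1 ∧ ∀ i, ‖x i - z‖ < 2 ^ (1/p.toReal) + ε := by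
  have hpr0 : 0 < p.toReal := hpr0 p hp
  have hpr1 : 1 ≤ p.toReal := hpr1 p hp
  have hp0 : p ≠ 0 := hp0 p hp
  -- choose s₀
  obtain ⟨s₀, hs₀pos, hs₀⟩ : ∃ s₀ : ℝ, 0 < s₀ ∧
      ((1+s₀)^p.toReal + 1)^(1/p.toReal) < 2^(1/p.toReal) + ε := by
    have hcont : ContinuousAt (fun s : ℝ => ((1+s)^p.toReal + 1)^(1/p.toReal)) 0 := by
      have h1 : ContinuousAt (fun s : ℝ => (1+s)^p.toReal + 1) 0 :=
        (((continuous_const.add continuous_id).continuousAt).rpow_const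
          (Or.inr hpr0.le)).add continuousAt_const
      exact h1.rpow_const (Or.inr (by positivity))
    have h0 : ((1+(0:ℝ))^p.toReal + 1)^(1/p.toReal) = 2^(1/p.toReal) := by norm_num
    have hten := hcont.tendsto
    rw [h0] at hten
    have hev : ∀ᶠ s in nhds (0:ℝ),
        ((1+s)^p.toReal + 1)^(1/p.toReal) < 2^(1/p.toReal) + ε :=
      hten (Iio_mem_nhds (lt_add_of_pos_right _ hε))
    obtain ⟨δ, hδpos, hδ⟩ := Metric.eventually_nhds_iff.mp hev
    refine ⟨δ/2, by positivity, hδ ?_⟩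
    rw [Real.dist_eq, sub_zero, abs_of_pos (by positivity)]
    linarith
  -- choose N
  obtain ⟨N, hNgt⟩ := exists_nat_gt ((n:ℝ) / s₀ ^ p.toReal)
  have hNpos : 0 < N := by
    rcases Nat.eq_zero_or_pos N with h | h
    · subst h
      norm_num at hNgt
      exact absurd hNgt (not_lt.mpr (by positivity))
    · exact h
  have hNR : 0 < (N:ℝ) := by exact_mod_cast hNpos
  have hnN : (n:ℝ) / N ≤ s₀ ^ p.toReal := by
    rw [div_le_iff₀ hNR]
    rw [div_lt_iff₀ (by positivity)] at hNgt
    nlinarith [hNgt]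
  -- choose j by averaging
  obtain ⟨j, hj⟩ : ∃ j : Fin N, ∑ i, eLpNorm (x i : I → ℝ) p (μ.restrict (A N j)) ^ p.toReal
      ≤ (n : ℝ≥0∞) / N := by
    have hsum : ∑ j : Fin N, ∑ i, eLpNorm (x i : I → ℝ) p (μ.restrict (A N j)) ^ p.toReal
        ≤ ∑ _j : Fin N, (n : ℝ≥0∞) / N := by
      rw [Finset.sum_comm]
      calc ∑ i, ∑ j : Fin N, eLpNorm (x i : I → ℝ) p (μ.restrict (A N j)) ^ p.toReal
          ≤ ∑ _i : Fin n, (1:ℝ≥0∞) := by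
            refine Finset.sum_le_sum fun i _ => ?_
            have h5 := eLpNorm_rpow_sum_le (ν := μ) hp0 hp (x i : I → ℝ) (A := A N) measA disjA
            rw [eLpNorm_one p hp (hx i), ENNReal.one_rpow] at h5
            exact h5
        _ = (n : ℝ≥0∞) := by simp
        _ = ∑ _j : Fin N, (n : ℝ≥0∞) / N := by
            rw [Finset.sum_const, Finset.card_univ, Fintype.card_fin, nsmul_eq_mul,
              ENNReal.mul_div_cancel (by exact_mod_cast hNpos.ne') (natCast_ne_top N)]
    obtain ⟨j, _, hj⟩ := ENNReal.exists_le_of_sum_le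
      ⟨⟨0, hNpos⟩, Finset.mem_univ _⟩ hsum
    exact ⟨j, hj⟩
  have hsmall : ∀ i, eLpNorm (x i : I → ℝ) p (μ.restrict (A N j)) ≤ ENNReal.ofReal s₀ := by
    intro i
    have h1 : eLpNorm (x i : I → ℝ) p (μ.restrict (A N j)) ^ p.toReal ≤ (n : ℝ≥0∞) / N :=
      le_trans (Finset.single_le_sum (f := fun i =>
        eLpNorm (x i : I → ℝ) p (μ.restrict (A N j)) ^ p.toReal) (fun _ _ => zero_le)
        (Finset.mem_univ i)) hj
    have h2 : (n : ℝ≥0∞) / N ≤ ENNReal.ofReal s₀ ^ p.toReal := by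
      rw [ENNReal.ofReal_rpow_of_pos hs₀pos]
      calc (n : ℝ≥0∞) / N = ENNReal.ofReal ((n:ℝ)/N) := by
            rw [ENNReal.ofReal_div_of_pos hNR]; simp
        _ ≤ ENNReal.ofReal (s₀ ^ p.toReal) := ENNReal.ofReal_le_ofReal hnN
    exact (ENNReal.rpow_le_rpow_iff hpr0).mp (h1.trans h2)
  refine ⟨y p N j, norm_y p hp j, fun i => ?_⟩
  -- estimate
  have hE : eLpNorm ((x i : I → ℝ) - (y p N j : I → ℝ)) p μ ^ p.toReal
      ≤ (ENNReal.ofReal s₀ + 1) ^ p.toReal + 1 := by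
    rw [eLpNorm_rpow_split hp0 hp _ (measA j)]
    have hA : eLpNorm ((x i : I → ℝ) - (y p N j : I → ℝ)) p (μ.restrict (A N j))
        ≤ ENNReal.ofReal s₀ + 1 := by
      refine le_trans (eLpNorm_sub_le ((Lp.aestronglyMeasurable (x i)).restrict)
        ((Lp.aestronglyMeasurable (y p N j)).restrict) Fact.out) ?_
      exact add_le_add (hsmall i) (eLpNorm_y_restrict p hp j).le
    have hAc : eLpNorm ((x i : I → ℝ) - (y p N j : I → ℝ)) p (μ.restrict (A N j)ᶜ) ≤ 1 := by
      rw [eLpNorm_sub_y_compl p hp j (x i)]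
      refine le_trans (eLpNorm_mono_measure _ Measure.restrict_le_self) ?_
      rw [eLpNorm_one p hp (hx i)]
    calc eLpNorm ((x i : I → ℝ) - (y p N j : I → ℝ)) p (μ.restrict (A N j)) ^ p.toReal
          + eLpNorm ((x i : I → ℝ) - (y p N j : I → ℝ)) p (μ.restrict (A N j)ᶜ) ^ p.toReal
        ≤ (ENNReal.ofReal s₀ + 1) ^ p.toReal + 1 ^ p.toReal :=
          add_le_add (ENNReal.rpow_le_rpow hA hpr0.le) (ENNReal.rpow_le_rpow hAc hpr0.le)
      _ = (ENNReal.ofReal s₀ + 1) ^ p.toReal + 1 := by rw [ENNReal.one_rpow]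
  have hfin : (ENNReal.ofReal s₀ + 1) ^ p.toReal + 1
      = ENNReal.ofReal ((1+s₀)^p.toReal + 1) := by
    rw [show (ENNReal.ofReal s₀ + 1) = ENNReal.ofReal (1+s₀) by
          rw [ENNReal.ofReal_add zero_le_one hs₀pos.le, ENNReal.ofReal_one]
          exact add_comm _ _,
      ENNReal.ofReal_rpow_of_pos (by positivity),
      ENNReal.ofReal_add (by positivity) zero_le_one, ENNReal.ofReal_one]
  have hE2 : eLpNorm ((x i : I → ℝ) - (y p N j : I → ℝ)) p μ
      ≤ ENNReal.ofReal (((1+s₀)^p.toReal + 1)^(1/p.toReal)) := by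
    have h3 : eLpNorm ((x i : I → ℝ) - (y p N j : I → ℝ)) p μ
        = (eLpNorm ((x i : I → ℝ) - (y p N j : I → ℝ)) p μ ^ p.toReal) ^ (1/p.toReal) := by
      rw [← ENNReal.rpow_mul, mul_one_div_cancel hpr0.ne', ENNReal.rpow_one]
    rw [h3, ← ENNReal.ofReal_rpow_of_pos (by positivity)]
    refine ENNReal.rpow_le_rpow ?_ (by positivity)
    rw [← hfin]
    exact hE
  have hnorm : ‖x i - y p N j‖
      = (eLpNorm ((x i : I → ℝ) - (y p N j : I → ℝ)) p μ).toReal := by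
    rw [Lp.norm_def]
    congr 1
    exact eLpNorm_congr_ae (Lp.coeFn_sub _ _)
  rw [hnorm]
  calc (eLpNorm ((x i : I → ℝ) - (y p N j : I → ℝ)) p μ).toReal
      ≤ ((1+s₀)^p.toReal + 1)^(1/p.toReal) :=
        ENNReal.toReal_le_of_le_ofReal (by positivity) hE2
    _ < 2^(1/p.toReal) + ε := hs₀

lemma lower (r : ℝ)
    (H : ∀ (n : ℕ) (x : Fin n → Lp ℝ p μ), (∀ i, ‖x i‖ = 1) →
      ∀ ε : ℝ, 0 < ε → ∃ z : Lp ℝ p μ, ‖z‖ = 1 ∧ ∀ i, ‖x i - z‖ < r + ε) :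
    (2:ℝ) ^ (1/p.toReal) ≤ r := by
  have hpr0 : 0 < p.toReal := hpr0 p hp
  have hp0 : p ≠ 0 := hp0 p hp
  have key : ∀ N : ℕ, 0 < N → ∀ ε : ℝ, 0 < ε →
      ((1 - ((N:ℝ)⁻¹)^(1/p.toReal))^p.toReal + (1 - (N:ℝ)⁻¹))^(1/p.toReal) ≤ r + ε := by
    intro N hN ε hε
    have hNR : (0:ℝ) < N := by exact_mod_cast hN
    have hN1 : (1:ℝ) ≤ N := by exact_mod_cast hN
    obtain ⟨z, hz1, hz2⟩ := H N (fun i => y p N i) (fun i => norm_y p hp i) ε hε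
    have hrε : (0:ℝ) < r + ε :=
      lt_of_le_of_lt (norm_nonneg ((y p N ⟨0, hN⟩) - z)) (hz2 ⟨0, hN⟩)
    -- choose i with small mass of z on A N i
    obtain ⟨i, _, hi⟩ : ∃ i ∈ Finset.univ,
        eLpNorm (z : I → ℝ) p (μ.restrict (A N i)) ^ p.toReal ≤ ((N:ℝ≥0∞))⁻¹ := by
      refine ENNReal.exists_le_of_sum_le ⟨⟨0, hN⟩, Finset.mem_univ _⟩ ?_
      have h5 := eLpNorm_rpow_sum_le (ν := μ) hp0 hp (z : I → ℝ) (A := A N) measA disjA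
      rw [eLpNorm_one p hp hz1, ENNReal.one_rpow] at h5
      refine h5.trans ?_
      rw [Finset.sum_const, Finset.card_univ, Fintype.card_fin, nsmul_eq_mul,
        ENNReal.mul_inv_cancel (by exact_mod_cast hN.ne') (natCast_ne_top N)]
    set b : ℝ≥0∞ := ((N:ℝ≥0∞))⁻¹ with hbdef
    have hb_ne_top : b ≠ ⊤ := ENNReal.inv_ne_top.mpr (by exact_mod_cast hN.ne')
    have hb_le_one : b ≤ 1 := ENNReal.inv_le_one.mpr (by exact_mod_cast hN)
    have hzA : eLpNorm (z : I → ℝ) p (μ.restrict (A N i)) ≤ b ^ (1/p.toReal) := by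
      have h6 : (eLpNorm (z : I → ℝ) p (μ.restrict (A N i)) ^ p.toReal) ^ (1/p.toReal)
          ≤ b ^ (1/p.toReal) := ENNReal.rpow_le_rpow hi (by positivity)
      rwa [← ENNReal.rpow_mul, mul_one_div_cancel hpr0.ne', ENNReal.rpow_one] at h6
    -- part on complement
    have hz_split := eLpNorm_rpow_split (ν := μ) hp0 hp (z : I → ℝ) (measA i)
    rw [eLpNorm_one p hp hz1, ENNReal.one_rpow] at hz_split
    have hAc : 1 - b ≤ eLpNorm (z : I → ℝ) p (μ.restrict (A N i)ᶜ) ^ p.toReal := by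
      rw [tsub_le_iff_right, hz_split,
        add_comm (eLpNorm (z : I → ℝ) p (μ.restrict (A N i)) ^ p.toReal)]
      exact add_le_add_right hi _
    -- part on the set
    have hA : 1 - b ^ (1/p.toReal)
        ≤ eLpNorm ((y p N i : I → ℝ) - (z : I → ℝ)) p (μ.restrict (A N i)) := by
      rw [tsub_le_iff_right, ← eLpNorm_y_restrict p hp i]
      have ht := eLpNorm_add_le
        (((Lp.aestronglyMeasurable (y p N i)).restrict (s := A N i)).sub
          ((Lp.aestronglyMeasurable z).restrict))
        ((Lp.aestronglyMeasurable z).restrict (s := A N i)) (Fact.out : 1 ≤ p)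
      rw [sub_add_cancel] at ht
      exact ht.trans (add_le_add_right hzA _)
    -- combine
    have hsplit := eLpNorm_rpow_split (ν := μ) hp0 hp
      ((y p N i : I → ℝ) - (z : I → ℝ)) (measA i)
    have hcompl : eLpNorm ((y p N i : I → ℝ) - (z : I → ℝ)) p (μ.restrict (A N i)ᶜ)
        = eLpNorm (z : I → ℝ) p (μ.restrict (A N i)ᶜ) := by
      rw [eLpNorm_sub_comm, eLpNorm_sub_y_compl p hp i z]
    have hmain : (1 - b ^ (1/p.toReal)) ^ p.toReal + (1 - b)
        ≤ eLpNorm ((y p N i : I → ℝ) - (z : I → ℝ)) p μ ^ p.toReal := by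
      rw [hsplit, hcompl]
      exact add_le_add (ENNReal.rpow_le_rpow hA hpr0.le) hAc
    have hEd : eLpNorm ((y p N i : I → ℝ) - (z : I → ℝ)) p μ ≤ ENNReal.ofReal (r + ε) := by
      have hco : eLpNorm ((y p N i : I → ℝ) - (z : I → ℝ)) p μ
          = eLpNorm ((y p N i - z : Lp ℝ p μ) : I → ℝ) p μ :=
        (eLpNorm_congr_ae (Lp.coeFn_sub _ _)).symm
      rw [hco]
      refine (ENNReal.le_ofReal_iff_toReal_le (Lp.eLpNorm_ne_top _) hrε.le).mpr ?_
      rw [← Lp.norm_def]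
      exact (hz2 i).le
    have hEN : (1 - b ^ (1/p.toReal)) ^ p.toReal + (1 - b)
        ≤ ENNReal.ofReal (r + ε) ^ p.toReal :=
      hmain.trans (ENNReal.rpow_le_rpow hEd hpr0.le)
    -- convert to reals
    have hb_toReal : b.toReal = (N:ℝ)⁻¹ := by
      rw [hbdef, ENNReal.toReal_inv, ENNReal.toReal_natCast]
    have hbr_le_one : b ^ (1/p.toReal) ≤ 1 := ENNReal.rpow_le_one hb_le_one (by positivity)
    have hreal : (1 - ((N:ℝ)⁻¹)^(1/p.toReal))^p.toReal + (1 - (N:ℝ)⁻¹) ≤ (r + ε)^p.toReal := by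
      have h7 := ENNReal.toReal_mono
        (ENNReal.rpow_ne_top_of_nonneg hpr0.le ENNReal.ofReal_ne_top) hEN
      rw [ENNReal.ofReal_rpow_of_pos hrε, ENNReal.toReal_ofReal (by positivity)] at h7
      rw [ENNReal.toReal_add (by
            exact ENNReal.rpow_ne_top_of_nonneg hpr0.le
              (ne_top_of_le_ne_top ENNReal.one_ne_top tsub_le_self))
          (ne_top_of_le_ne_top ENNReal.one_ne_top tsub_le_self),
        ← ENNReal.toReal_rpow, ENNReal.toReal_sub_of_le hbr_le_one ENNReal.one_ne_top,
        ENNReal.toReal_sub_of_le hb_le_one ENNReal.one_ne_top, ENNReal.toReal_one,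
        ← ENNReal.toReal_rpow, hb_toReal] at h7
      exact h7
    have h8 : (((1 - ((N:ℝ)⁻¹)^(1/p.toReal))^p.toReal + (1 - (N:ℝ)⁻¹))^(1/p.toReal) : ℝ)
        ≤ ((r + ε)^p.toReal)^(1/p.toReal) := by
      have hcN : ((N:ℝ)⁻¹)^(1/p.toReal) ≤ 1 :=
        Real.rpow_le_one (by positivity) (by rw [inv_le_one_iff₀]; right; exact hN1)
          (by positivity)
      have hnonneg : (0:ℝ) ≤ (1 - ((N:ℝ)⁻¹)^(1/p.toReal))^p.toReal + (1 - (N:ℝ)⁻¹) := by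
        have h9 : (0:ℝ) ≤ (1 - ((N:ℝ)⁻¹)^(1/p.toReal))^p.toReal :=
          Real.rpow_nonneg (by linarith) _
        have h10 : (N:ℝ)⁻¹ ≤ 1 := by rw [inv_le_one_iff₀]; right; exact hN1
        linarith
      exact Real.rpow_le_rpow hnonneg hreal (by positivity)
    rwa [← Real.rpow_mul hrε.le, mul_one_div_cancel hpr0.ne', Real.rpow_one] at h8
  -- pass to the limit in ε, then in N
  have hDle : ∀ N : ℕ, 0 < N →
      ((1 - ((N:ℝ)⁻¹)^(1/p.toReal))^p.toReal + (1 - (N:ℝ)⁻¹))^(1/p.toReal) ≤ r := by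
    intro N hN
    by_contra hlt
    push_neg at hlt
    have := key N hN
      ((((1 - ((N:ℝ)⁻¹)^(1/p.toReal))^p.toReal + (1 - (N:ℝ)⁻¹))^(1/p.toReal) - r)/2)
      (by linarith)
    linarith
  -- limit N → ∞
  have h1 : Filter.Tendsto (fun N : ℕ => ((N:ℝ)⁻¹)) Filter.atTop (nhds 0) :=
    tendsto_inv_atTop_zero.comp tendsto_natCast_atTop_atTop
  have h2 : Filter.Tendsto (fun N : ℕ => ((N:ℝ)⁻¹)^(1/p.toReal)) Filter.atTop (nhds 0) := by
    have hc := (Real.continuousAt_rpow_const 0 (1/p.toReal) (Or.inr (by positivity))).tendsto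
    have := hc.comp h1
    rwa [Real.zero_rpow (by positivity : (0:ℝ) < 1/p.toReal).ne'] at this
  have h3 : Filter.Tendsto (fun N : ℕ => (1 - ((N:ℝ)⁻¹)^(1/p.toReal))^p.toReal)
      Filter.atTop (nhds 1) := by
    have hin : Filter.Tendsto (fun N : ℕ => 1 - ((N:ℝ)⁻¹)^(1/p.toReal))
        Filter.atTop (nhds 1) := by
      have := tendsto_const_nhds (x := (1:ℝ)) (f := Filter.atTop (α := ℕ)) |>.sub h2
      rwa [sub_zero] at this
    have hc := (Real.continuousAt_rpow_const 1 p.toReal (Or.inl one_ne_zero)).tendsto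
    have := hc.comp hin
    rwa [Real.one_rpow] at this
  have h4 : Filter.Tendsto
      (fun N : ℕ => (1 - ((N:ℝ)⁻¹)^(1/p.toReal))^p.toReal + (1 - (N:ℝ)⁻¹))
      Filter.atTop (nhds 2) := by
    have hin : Filter.Tendsto (fun N : ℕ => 1 - ((N:ℝ)⁻¹)) Filter.atTop (nhds 1) := by
      have := tendsto_const_nhds (x := (1:ℝ)) (f := Filter.atTop (α := ℕ)) |>.sub h1
      rwa [sub_zero] at this
    have h4' := h3.add hin
    rwa [one_add_one_eq_two] at h4'
  have h5 : Filter.Tendsto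
      (fun N : ℕ => ((1 - ((N:ℝ)⁻¹)^(1/p.toReal))^p.toReal + (1 - (N:ℝ)⁻¹))^(1/p.toReal))
      Filter.atTop (nhds ((2:ℝ)^(1/p.toReal))) := by
    have hc := (Real.continuousAt_rpow_const 2 (1/p.toReal) (Or.inl two_ne_zero)).tendsto
    exact hc.comp h4
  refine le_of_tendsto h5 ?_
  filter_upwards [Filter.eventually_ge_atTop 1] with N hN
  exact hDle N hN

end

end ThinLp

end ThinAux

/-- For every `1 ≤ p < ∞`, `t(L_p[0,1]) = 2^(1/p)`, where `L_p[0,1]` is the space of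
`p`-integrable functions on `[0,1]` with respect to Lebesgue measure. -/
theorem thinness_Lp (p : ℝ≥0∞) [Fact (1 ≤ p)] (hp : p ≠ ⊤) :
    thinness (MeasureTheory.Lp ℝ p
      (MeasureTheory.volume : MeasureTheory.Measure (Set.Icc (0:ℝ) 1))) =
    (2 : ℝ) ^ (1 / p.toReal) := by
  have hmem : (2 : ℝ) ^ (1 / p.toReal) ∈ {r : ℝ | 0 < r ∧
      ∀ (n : ℕ) (x : Fin n → MeasureTheory.Lp ℝ p (MeasureTheory.volume :
        MeasureTheory.Measure (Set.Icc (0:ℝ) 1))), (∀ i, ‖x i‖ = 1) →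
      ∀ ε : ℝ, 0 < ε → ∃ y, ‖y‖ = 1 ∧ ∀ i, ‖x i - y‖ < (2 : ℝ) ^ (1 / p.toReal) + ε} :=
    ⟨Real.rpow_pos_of_pos two_pos _, fun n x hx ε hε => ThinLp.upper p hp n x hx ε hε⟩
  rw [thinness]
  apply le_antisymm
  · exact csInf_le ⟨0, fun r hr => hr.1.le⟩ hmem
  · refine le_csInf ⟨_, hmem⟩ ?_
    rintro r ⟨hr0, hr⟩
    exact ThinLp.lower p hp r hr
end
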